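/- arXiv:2108.10228 — 10 statements merged into one kernel-verified Lean document; each statement's English description precedes it below -/
import Mathlib

section
/- Let T be a left-invertible bounded operator on a Hilbert space H with Cauchy dual T'. Then the following are equivalent: (i) ‖T'T*x‖ ≤ ‖T'Tx‖ for all x ∈ H; (ii) T(T*T)^{-1}T* ≤ T*(T*T)^{-1}T; (iii) P ≤ T*(T*T)^{-1}T where P is the orthogonal projection onto the closure of the range of T. -/
open ContinuousLinearMap
open scoped ComplexInnerProductSpace

/-- The Cauchy dual `T' = T (T*T)⁻¹` of a left-invertible operator. -/
noncomputable def cauchyDual {H : Type*} [NormedAddCommGroup H] [InnerProductSpace ℂ H]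
    [CompleteSpace H] (T : H →L[ℂ] H) : H →L[ℂ] H :=
  T * Ring.inverse (adjoint T * T)

set_option maxHeartbeats 1000000 in
/-- For a left-invertible `T` with Cauchy dual `T'` and `P` the orthogonal projection onto the
closure of the range of `T`, the following are equivalent:
(i) `‖T' T* x‖ ≤ ‖T' T x‖` for all `x`;
(ii) `T (T*T)⁻¹ T* ≤ T* (T*T)⁻¹ T`;
(iii) `P ≤ T* (T*T)⁻¹ T`. -/
theorem stmt_3 {H : Type*} [NormedAddCommGroup H] [InnerProductSpace ℂ H] [CompleteSpace H]
    (T P : H →L[ℂ] H)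
    (hli : ∃ L : H →L[ℂ] H, L * T = 1)
    (hP1 : P * P = P) (hP2 : adjoint P = P)
    (hP3 : LinearMap.range (P : H →ₗ[ℂ] H) = (LinearMap.range (T : H →ₗ[ℂ] H)).topologicalClosure) :
    List.TFAE
      [ ∀ x, ‖(cauchyDual T * adjoint T) x‖ ≤ ‖(cauchyDual T * T) x‖,
        (adjoint T * Ring.inverse (adjoint T * T) * T
          - T * Ring.inverse (adjoint T * T) * adjoint T).IsPositive,
        (adjoint T * Ring.inverse (adjoint T * T) * T - P).IsPositive ] := by
  obtain ⟨L, hL⟩ := hli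
  set A : H →L[ℂ] H := adjoint T * T with hA_def
  set B : H →L[ℂ] H := Ring.inverse A with hB_def
  clear_value B A
  have hLx : ∀ x : H, L (T x) = x := fun x => by
    have := ContinuousLinearMap.ext_iff.mp hL x
    simpa [mul_apply] using this
  have hTinj : ∀ x : H, T x = 0 → x = 0 := fun x hx => by
    have h := hLx x; rw [hx, map_zero] at h; exact h.symm
  have hAsa : star A = A := by
    rw [hA_def, star_mul, star_eq_adjoint, star_eq_adjoint, adjoint_adjoint]
  have hinnerA : ∀ x y : H, ⟪x, A y⟫ = ⟪T x, T y⟫ := fun x y => by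
    rw [hA_def]; simp only [mul_apply_eq_comp]; rw [adjoint_inner_right]
  have hbound : ∀ x : H, ‖x‖ ≤ ‖L‖ * ‖T x‖ := fun x => by
    calc ‖x‖ = ‖L (T x)‖ := by rw [hLx]
    _ ≤ ‖L‖ * ‖T x‖ := L.le_opNorm _
  have hAbound : ∀ x : H, ‖x‖ ≤ ‖L‖ * ‖L‖ * ‖A x‖ := fun x => by
    rcases eq_or_ne x 0 with rfl | hx
    · simp
    have hxpos : (0:ℝ) < ‖x‖ := norm_pos_iff.mpr hx
    have h3 : ‖T x‖ * ‖T x‖ = RCLike.re ⟪x, A x⟫ := by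
      rw [hinnerA]
      rw [inner_self_eq_norm_sq (𝕜 := ℂ), sq]
    have h4 : RCLike.re ⟪x, A x⟫ ≤ ‖x‖ * ‖A x‖ := re_inner_le_norm _ _
    have h2 : ‖x‖ * ‖x‖ ≤ (‖L‖ * ‖T x‖) * (‖L‖ * ‖T x‖) :=
      mul_le_mul (hbound x) (hbound x) (norm_nonneg _) (by positivity)
    have h5 : ‖x‖ * ‖x‖ ≤ (‖L‖ * ‖L‖ * ‖A x‖) * ‖x‖ := by
      calc ‖x‖ * ‖x‖ ≤ (‖L‖ * ‖T x‖) * (‖L‖ * ‖T x‖) := h2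
      _ = ‖L‖ * ‖L‖ * (‖T x‖ * ‖T x‖) := by ring
      _ = ‖L‖ * ‖L‖ * RCLike.re ⟪x, A x⟫ := by rw [h3]
      _ ≤ ‖L‖ * ‖L‖ * (‖x‖ * ‖A x‖) := by
          apply mul_le_mul_of_nonneg_left h4 (by positivity)
      _ = (‖L‖ * ‖L‖ * ‖A x‖) * ‖x‖ := by ring
    exact le_of_mul_le_mul_right h5 hxpos
  have hAinj : Function.Injective A := by
    intro x y hxy
    have h := hAbound (x - y)
    rw [map_sub, hxy, sub_self, norm_zero, mul_zero] at h
    exact sub_eq_zero.mp (norm_le_zero_iff.mp h)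
  have hAsurj : Function.Surjective A := by
    have hanti : AntilipschitzWith (‖L‖₊ * ‖L‖₊) A :=
      A.antilipschitz_of_bound fun x => by
        simpa [NNReal.coe_mul, coe_nnnorm] using hAbound x
    have hclosedA : IsClosed (LinearMap.range (A : H →ₗ[ℂ] H) : Set H) := by
      rw [LinearMap.coe_range]
      exact hanti.isClosed_range A.uniformContinuous
    haveI : CompleteSpace (LinearMap.range (A : H →ₗ[ℂ] H)) := hclosedA.completeSpace_coe
    change Function.Surjective (A : H →ₗ[ℂ] H)
    rw [← LinearMap.range_eq_top, ← Submodule.orthogonal_eq_bot_iff,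
      Submodule.eq_bot_iff]
    intro y hy
    have h0 : ⟪A y, y⟫ = 0 :=
      (Submodule.mem_orthogonal _ y).mp hy (A y) (LinearMap.mem_range_self _ y)
    have h1 : ⟪y, A y⟫ = 0 := by
      rw [← inner_conj_symm, h0, map_zero]
    have h2 : ⟪T y, T y⟫ = 0 := by rw [← hinnerA, h1]
    exact hTinj y (inner_self_eq_zero.mp h2)
  have hAunit : IsUnit A := isUnit_iff_bijective.mpr ⟨hAinj, hAsurj⟩
  have hAB : A * B = 1 := by rw [hB_def]; exact Ring.mul_inverse_cancel A hAunit
  have hBA : B * A = 1 := by rw [hB_def]; exact Ring.inverse_mul_cancel A hAunit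
  have hABx : ∀ y : H, A (B y) = y := fun y => by
    have := ContinuousLinearMap.ext_iff.mp hAB y
    simpa [mul_apply] using this
  have hBAx : ∀ y : H, B (A y) = y := fun y => by
    have := ContinuousLinearMap.ext_iff.mp hBA y
    simpa [mul_apply] using this
  have hBs : star B = B := by
    rw [hB_def, ← Ring.inverse_star, hAsa]
  have hBad : adjoint B = B := by rw [← star_eq_adjoint, hBs]
  -- self-adjointness moves
  have hTadj : ∀ u x : H, ⟪T u, x⟫ = ⟪u, adjoint T x⟫ := fun u x => by
    rw [← adjoint_inner_left, adjoint_adjoint]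
  -- the key norm identity for the Cauchy dual
  have hkey : ∀ y : H, ‖T (B y)‖ ^ 2 = RCLike.re ⟪B y, y⟫ := fun y => by
    have h3 : A (B y) = y := hABx y
    rw [← inner_self_eq_norm_sq (𝕜 := ℂ), ← hinnerA, h3]
  -- Q := T * B * adjoint T is the orthogonal projection onto range T
  have hQTx : ∀ y : H, (T * B * adjoint T) (T y) = T y := fun y => by
    simp only [mul_apply_eq_comp]
    have h0 : adjoint T (T y) = A y := by rw [hA_def, mul_apply_eq_comp]
    rw [h0, hBAx]
  have hQQx : ∀ y : H, (T * B * adjoint T) ((T * B * adjoint T) y)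
      = (T * B * adjoint T) y := fun y => by
    simp only [mul_apply_eq_comp]
    have h1 : adjoint T (T (B (adjoint T y))) = A (B (adjoint T y)) := by
      rw [hA_def, mul_apply_eq_comp]
    rw [h1, hABx]
  have hQmem : ∀ x : H, (T * B * adjoint T) x ∈ LinearMap.range (T : H →ₗ[ℂ] H) := fun x =>
    ⟨B (adjoint T x), rfl⟩
  have hQfix : ∀ x : H, x ∈ LinearMap.range (T : H →ₗ[ℂ] H) → (T * B * adjoint T) x = x := by
    rintro x ⟨y, rfl⟩
    exact hQTx y
  have hQsa : star (T * B * adjoint T) = T * B * adjoint T := by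
    rw [star_mul, star_mul, star_eq_adjoint (A := T), hBs,
      star_eq_adjoint (A := adjoint T), adjoint_adjoint, mul_assoc]
  have hQinner : ∀ a b : H, ⟪(T * B * adjoint T) a, b⟫ = ⟪a, (T * B * adjoint T) b⟫ :=
    fun a b => by
      rw [← adjoint_inner_left, ← star_eq_adjoint (A := T * B * adjoint T), hQsa]
  have hPinner : ∀ a b : H, ⟪P a, b⟫ = ⟪a, P b⟫ := fun a b => by
    rw [← adjoint_inner_left, hP2]
  have hPx : ∀ x : H, P (P x) = P x := fun x => by
    have := ContinuousLinearMap.ext_iff.mp hP1 x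
    simpa [mul_apply] using this
  have hclosedT : IsClosed ((LinearMap.range (T : H →ₗ[ℂ] H) : Submodule ℂ H) : Set H) := by
    have hset : ((LinearMap.range (T : H →ₗ[ℂ] H) : Submodule ℂ H) : Set H)
        = {x | (T * B * adjoint T) x = x} := by
      ext x
      constructor
      · intro hx; exact hQfix x hx
      · intro hx
        have : (T * B * adjoint T) x ∈ LinearMap.range (T : H →ₗ[ℂ] H) := hQmem x
        rwa [hx] at this
    rw [hset]
    exact isClosed_eq (T * B * adjoint T).continuous continuous_id
  have hrangeP : LinearMap.range (P : H →ₗ[ℂ] H) = LinearMap.range (T : H →ₗ[ℂ] H) := by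
    rw [hP3, IsClosed.submodule_topologicalClosure_eq hclosedT]
  have hPQ : P = T * B * adjoint T := by
    ext x
    have hy : (T * B * adjoint T) (P x) = P x := by
      apply hQfix
      rw [← hrangeP]
      exact LinearMap.mem_range_self _ x
    have hPv : P (x - P x) = 0 := by
      rw [map_sub, hPx, sub_self]
    have hker : (T * B * adjoint T) (x - P x) = 0 := by
      have hmem : (T * B * adjoint T) (x - P x) ∈ LinearMap.range (P : H →ₗ[ℂ] H) := by
        rw [hrangeP]; exact hQmem _
      obtain ⟨w, hw⟩ := hmem
      have hz : ⟪(T * B * adjoint T) (x - P x), (T * B * adjoint T) (x - P x)⟫ = 0 := by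
        calc ⟪(T * B * adjoint T) (x - P x), (T * B * adjoint T) (x - P x)⟫
            = ⟪x - P x, (T * B * adjoint T) ((T * B * adjoint T) (x - P x))⟫ :=
              hQinner _ _
          _ = ⟪x - P x, (T * B * adjoint T) (x - P x)⟫ := by rw [hQQx]
          _ = ⟪x - P x, P w⟫ := by rw [← hw]; rfl
          _ = ⟪P (x - P x), w⟫ := (hPinner _ _).symm
          _ = 0 := by rw [hPv, inner_zero_left]
      exact inner_self_eq_zero.mp hz
    have hsplit : (T * B * adjoint T) x
        = (T * B * adjoint T) (P x) + (T * B * adjoint T) (x - P x) := by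
      rw [← map_add]
      congr 1
      abel
    rw [hsplit, hy, hker, add_zero]
  -- selfadjointness of the difference operator
  have hDsa : IsSelfAdjoint (adjoint T * B * T - T * B * adjoint T) := by
    show star _ = _
    rw [star_sub, hQsa, star_mul, star_mul, star_eq_adjoint (A := adjoint T),
      adjoint_adjoint, hBs, star_eq_adjoint (A := T), mul_assoc, ← mul_assoc]
  -- the real inner product computation
  have hre2 : ∀ x : H, RCLike.re ⟪(adjoint T * B * T - T * B * adjoint T) x, x⟫
      = ‖T (B (T x))‖ ^ 2 - ‖T (B (adjoint T x))‖ ^ 2 := fun x => by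
    simp only [sub_apply, mul_apply_eq_comp, inner_sub_left, map_sub]
    rw [adjoint_inner_left, hTadj, hkey, hkey]
  have hcd : cauchyDual T = T * B := by
    unfold cauchyDual
    rw [← hA_def, ← hB_def]
  tfae_have 1 ↔ 2 := by
    constructor
    · intro h
      refine ⟨hDsa.isSymmetric, fun x => ?_⟩
      rw [reApplyInnerSelf_apply, hre2 x, sub_nonneg]
      have hx := h x
      rw [hcd] at hx
      simp only [mul_apply_eq_comp] at hx
      exact pow_le_pow_left₀ (norm_nonneg _) hx 2
    · rintro ⟨_, hpos⟩ x
      have hx := hpos x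
      rw [reApplyInnerSelf_apply, hre2 x, sub_nonneg] at hx
      rw [hcd]
      simp only [mul_apply_eq_comp]
      exact le_of_pow_le_pow_left₀ two_ne_zero (norm_nonneg _) hx
  tfae_have 2 ↔ 3 := by rw [hPQ]
  tfae_finish
end

section
/- Every concave operator (i.e., every 2-expansion) is weakly concave. -/
open ContinuousLinearMap

/-- The approximate point spectrum: `z` such that `T - z·I` is not bounded below. -/
def approxPointSpectrum {H : Type*} [NormedAddCommGroup H] [InnerProductSpace ℂ H]
    [CompleteSpace H] (T : H →L[ℂ] H) : Set ℂ :=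
  {z | ¬ ∃ c : ℝ, 0 < c ∧ ∀ x : H, c * ‖x‖ ≤ ‖(T - z • (1 : H →L[ℂ] H)) x‖}

section Aux
open RCLike Finset

variable {H : Type*} [NormedAddCommGroup H] [InnerProductSpace ℂ H] [CompleteSpace H]

local notation "⟪" x ", " y "⟫" => @inner ℂ _ _ x y




lemma key_of_conc (T : H →L[ℂ] H)
    (hconc : (2 • (adjoint T * T) - 1 - (adjoint T) ^ 2 * T ^ 2).IsPositive) :
    ∀ y : H, ‖T (T y)‖ ^ 2 + ‖y‖ ^ 2 ≤ 2 * ‖T y‖ ^ 2 := by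
  intro y
  have h := hconc.inner_nonneg_left y
  simp only [sub_apply, smul_apply, ContinuousLinearMap.one_apply, ContinuousLinearMap.mul_apply, pow_succ, pow_zero, one_mul] at h
  rw [two_smul, inner_sub_left, inner_sub_left, inner_add_left] at h
  have h1 : ⟪(adjoint T) (T y), y⟫ = ⟪T y, T y⟫ := by rw [adjoint_inner_left]
  have h2 : ⟪(adjoint T) ((adjoint T) (T (T y))), y⟫ = ⟪T (T y), T (T y)⟫ := by
    rw [adjoint_inner_left, adjoint_inner_left]
  rw [h1, h2] at h
  replace h := (RCLike.le_iff_re_im.mp h).1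
  simp only [map_sub, map_add, map_zero] at h
  rw [inner_self_eq_norm_sq (𝕜 := ℂ), inner_self_eq_norm_sq (𝕜 := ℂ),
    inner_self_eq_norm_sq (𝕜 := ℂ)] at h
  linarith

lemma diff_le (T : H →L[ℂ] H)
    (key : ∀ y : H, ‖T (T y)‖ ^ 2 + ‖y‖ ^ 2 ≤ 2 * ‖T y‖ ^ 2) (x : H) :
    ∀ n : ℕ, ‖(T ^ (n+1)) x‖ ^ 2 - ‖(T ^ n) x‖ ^ 2 ≤ ‖T x‖ ^ 2 - ‖x‖ ^ 2 := by
  intro n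
  induction n with
  | zero => simp [pow_one, pow_zero, one_apply]
  | succ n ih =>
      have happ : ∀ m : ℕ, (T ^ (m+1)) x = T ((T ^ m) x) := by
        intro m; rw [pow_succ']; rfl
      have := key ((T ^ n) x)
      rw [← happ n] at this
      have h3 : (T ^ (n+1+1)) x = T ((T ^ (n+1)) x) := happ (n+1)
      rw [h3]
      linarith

lemma growth (T : H →L[ℂ] H)
    (key : ∀ y : H, ‖T (T y)‖ ^ 2 + ‖y‖ ^ 2 ≤ 2 * ‖T y‖ ^ 2) (x : H) :
    ∀ n : ℕ, ‖(T ^ n) x‖ ^ 2 ≤ ‖x‖ ^ 2 + n * (‖T x‖ ^ 2 - ‖x‖ ^ 2) := by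
  intro n
  induction n with
  | zero => simp
  | succ n ih =>
      have := diff_le T key x n
      push_cast
      push_cast at ih
      push_cast at this
      linarith

lemma expansive (T : H →L[ℂ] H)
    (key : ∀ y : H, ‖T (T y)‖ ^ 2 + ‖y‖ ^ 2 ≤ 2 * ‖T y‖ ^ 2) (x : H) :
    ‖x‖ ≤ ‖T x‖ := by
  by_contra hlt
  push_neg at hlt
  have hd : ‖T x‖ ^ 2 - ‖x‖ ^ 2 < 0 := by nlinarith [norm_nonneg x, norm_nonneg (T x)]
  obtain ⟨n, hn⟩ := exists_nat_gt (‖x‖ ^ 2 / (-(‖T x‖ ^ 2 - ‖x‖ ^ 2)))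
  have h1 := growth T key x n
  have h2 : (0:ℝ) ≤ ‖(T ^ n) x‖ ^ 2 := sq_nonneg _
  rw [div_lt_iff₀ (by linarith)] at hn
  nlinarith

lemma aux_unit (T : H →L[ℂ] H) (hexp : ∀ x : H, ‖x‖ ≤ ‖T x‖) :
    IsUnit (adjoint T * T) := by
  refine isUnit_of_forall_le_norm_inner_map (adjoint T * T) (c := 1) (by norm_num) ?_
  intro x
  have h1 : ⟪(adjoint T * T) x, x⟫ = ⟪T x, T x⟫ := by
    rw [ContinuousLinearMap.mul_apply, adjoint_inner_left]
  rw [h1, inner_self_eq_norm_sq_to_K, norm_pow, RCLike.norm_ofReal, abs_norm]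
  have := hexp x
  have h2 : ‖x‖^2 ≤ ‖T x‖^2 := by nlinarith [norm_nonneg x]
  simpa using h2

lemma aux_dual (T : H →L[ℂ] H)
    (key : ∀ y : H, ‖T (T y)‖ ^ 2 + ‖y‖ ^ 2 ≤ 2 * ‖T y‖ ^ 2)
    (hU : IsUnit (adjoint T * T)) :
    ∀ x : H, ‖(T * Ring.inverse (adjoint T * T) * adjoint T) x‖ ≤
      ‖(T * Ring.inverse (adjoint T * T) * T) x‖ := by
  set S := adjoint T * T with hS
  set R := Ring.inverse S with hR
  have hRS : R * S = 1 := Ring.inverse_mul_cancel S hU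
  have hSR : S * R = 1 := Ring.mul_inverse_cancel S hU
  have hRS_app : ∀ w : H, R (S w) = w := fun w => by
    have := DFunLike.congr_fun hRS w; simpa [mul_apply] using this
  have hSR_app : ∀ w : H, S (R w) = w := fun w => by
    have := DFunLike.congr_fun hSR w; simpa [mul_apply] using this
  have hS_app : ∀ w : H, S w = adjoint T (T w) := fun w => by simp [hS, mul_apply]
  -- S selfadjoint (as inner symmetry)
  have hSsym : ∀ u v : H, ⟪S u, v⟫ = ⟪u, S v⟫ := by
    intro u v
    rw [hS_app, hS_app, adjoint_inner_left, ← adjoint_inner_right]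
  -- ⟪R w, w⟫ is ‖T (R w)‖²
  have hRinner : ∀ w : H, ⟪R w, w⟫ = (‖T (R w)‖ : ℂ) ^ 2 := by
    intro w
    nth_rewrite 2 [← hSR_app w]
    rw [hS_app, adjoint_inner_right, inner_self_eq_norm_sq_to_K]
    norm_cast
  -- main inequality: 2‖y‖² ≤ re ⟪R y, y⟫ + ‖T y‖²
  have cauchy2 : ∀ y : H, 2 * ‖y‖ ^ 2 ≤ re ⟪R y, y⟫ + ‖T y‖ ^ 2 := by
    intro y
    have hpos : 0 ≤ re ⟪R (y - S y), y - S y⟫ := by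
      rw [hRinner]
      have : re ((‖T (R (y - S y))‖ : ℂ) ^ 2) = ‖T (R (y - S y))‖ ^ 2 := by norm_cast
      rw [this]; positivity
    have hexpand : ⟪R (y - S y), y - S y⟫
        = ⟪R y, y⟫ - ⟪y, y⟫ - ⟪y, y⟫ + ⟪y, S y⟫ := by
      rw [map_sub, hRS_app, inner_sub_left, inner_sub_right, inner_sub_right]
      have h1 : ⟪R y, S y⟫ = ⟪y, y⟫ := by rw [← hSsym, hSR_app]
      rw [h1]
      ring
    have hTy : ⟪y, S y⟫ = (‖T y‖ : ℂ) ^ 2 := by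
      rw [hS_app, adjoint_inner_right, inner_self_eq_norm_sq_to_K]
      norm_cast
    rw [hexpand, hTy] at hpos
    simp only [map_add, map_sub, inner_self_eq_norm_sq] at hpos
    have : re ((‖T y‖ : ℂ) ^ 2) = ‖T y‖ ^ 2 := by norm_cast
    rw [this] at hpos
    linarith
  intro x
  -- RHS bound: ‖x‖² ≤ ‖(T R T) x‖²
  have hRT : ((T * R * T) x) = T (R (T x)) := by simp [mul_apply]
  have hRTs : ((T * R * adjoint T) x) = T (R (adjoint T x)) := by simp [mul_apply]
  have hRHS : ‖x‖ ^ 2 ≤ ‖T (R (T x))‖ ^ 2 := by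
    have h1 : (‖T (R (T x))‖ : ℂ) ^ 2 = ⟪R (T x), T x⟫ := (hRinner (T x)).symm
    have h2 : ‖T (R (T x))‖ ^ 2 = re ⟪R (T x), T x⟫ := by
      rw [← h1]; norm_cast
    have := cauchy2 (T x)
    have := key x
    linarith
  -- LHS bound: ‖T (R (T* x))‖ ≤ ‖x‖
  have hLHS : ‖T (R (adjoint T x))‖ ≤ ‖x‖ := by
    set P := T (R (adjoint T x)) with hP
    have h1 : (‖P‖ : ℂ) ^ 2 = ⟪R (adjoint T x), adjoint T x⟫ := (hRinner _).symm
    have h2 : ⟪R (adjoint T x), adjoint T x⟫ = ⟪P, x⟫ := by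
      rw [adjoint_inner_right]
    have h3 : ‖P‖ ^ 2 = re ⟪P, x⟫ := by
      rw [← h2, ← h1]; norm_cast
    have h4 : re ⟪P, x⟫ ≤ ‖P‖ * ‖x‖ := by
      calc re ⟪P, x⟫ ≤ ‖(⟪P, x⟫ : ℂ)‖ := RCLike.re_le_norm _
        _ ≤ ‖P‖ * ‖x‖ := norm_inner_le_norm _ _
    nlinarith [norm_nonneg P, norm_nonneg x]
  rw [hRT, hRTs]
  have h5 : ‖x‖ ≤ ‖T (R (T x))‖ := by
    nlinarith [norm_nonneg x, norm_nonneg (T (R (T x)))]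
  linarith

lemma aux_ltone (T : H →L[ℂ] H) (hexp : ∀ x : H, ‖x‖ ≤ ‖T x‖) (z : ℂ) (hz : ‖z‖ < 1) :
    ∃ c : ℝ, 0 < c ∧ ∀ x : H, c * ‖x‖ ≤ ‖(T - z • (1 : H →L[ℂ] H)) x‖ := by
  refine ⟨1 - ‖z‖, by linarith, fun x => ?_⟩
  have h1 : (T - z • (1 : H →L[ℂ] H)) x = T x - z • x := by
    simp [sub_apply, smul_apply]
  rw [h1]
  have h2 : ‖T x‖ - ‖z • x‖ ≤ ‖T x - z • x‖ := norm_sub_norm_le _ _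
  rw [norm_smul] at h2
  have := hexp x
  nlinarith [norm_nonneg x, norm_nonneg (T x)]

set_option maxHeartbeats 1000000 in
lemma aux_gtone (T : H →L[ℂ] H)
    (hgrowth : ∀ (x : H) (n : ℕ), ‖(T ^ n) x‖ ^ 2 ≤ ‖x‖ ^ 2 + n * (‖T x‖ ^ 2 - ‖x‖ ^ 2))
    (z : ℂ) (hz : 1 < ‖z‖) :
    ∃ c : ℝ, 0 < c ∧ ∀ x : H, c * ‖x‖ ≤ ‖(T - z • (1 : H →L[ℂ] H)) x‖ := by
  set r : ℝ := ‖z‖ with hr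
  set K : ℝ := ‖T‖ ^ 2 with hK
  have hK0 : 0 ≤ K := sq_nonneg _
  set s : ℝ := r ^ 2 with hs
  have hs1 : 1 < s := by nlinarith
  -- choose n₀
  set n₀ : ℕ := ⌈2 * K / (s - 1) ^ 2⌉₊ + 1 with hn₀
  have hn₀pos : 0 < n₀ := Nat.succ_pos _
  have hn₀big : 2 * K < n₀ * (s - 1) ^ 2 := by
    have h1 : 2 * K / (s - 1) ^ 2 ≤ (⌈2 * K / (s - 1) ^ 2⌉₊ : ℝ) := Nat.le_ceil _
    have h2 : ((⌈2 * K / (s - 1) ^ 2⌉₊ : ℕ) : ℝ) < n₀ := by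
      rw [hn₀]; push_cast; linarith
    have h3 : (0:ℝ) < (s - 1) ^ 2 := by nlinarith
    rw [div_le_iff₀ h3] at h1
    nlinarith
  set N : ℕ := 2 * n₀ with hN
  have hNpos : 0 < N := by positivity
  -- s ^ N > 1 + N * K
  have hsN : 1 + N * K < s ^ N := by
    have hb : 1 + (n₀ : ℝ) * (s - 1) ≤ s ^ n₀ := by
      have := one_add_mul_le_pow (a := s - 1) (by linarith) n₀
      simpa using this
    have hb0 : (0:ℝ) ≤ 1 + (n₀ : ℝ) * (s - 1) := by
      have : (0:ℝ) ≤ (n₀:ℝ) := Nat.cast_nonneg _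
      nlinarith
    have hsq : (1 + (n₀ : ℝ) * (s - 1)) ^ 2 ≤ (s ^ n₀) ^ 2 := by
      apply pow_le_pow_left₀ hb0 hb 2
    have hpow : (s ^ n₀) ^ 2 = s ^ N := by rw [hN, ← pow_mul, Nat.mul_comm]
    have hn₀r : (0:ℝ) < (n₀:ℝ) := by exact_mod_cast hn₀pos
    have hNr : (N : ℝ) = 2 * (n₀ : ℝ) := by rw [hN]; push_cast; ring
    rw [← hpow, hNr]
    nlinarith
  -- the bound
  set M : ℝ := max ‖T‖ r with hM
  have hM1 : 1 < M := lt_of_lt_of_le hz (le_max_right _ _)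
  have hM0 : (0:ℝ) ≤ M := by linarith
  have hMT : ‖T‖ ≤ M := le_max_left _ _
  have hMr : r ≤ M := le_max_right _ _
  set B : ℝ := Real.sqrt (1 + N * K) with hB
  have hBnn : 0 ≤ B := Real.sqrt_nonneg _
  have hB2 : B ^ 2 = 1 + N * K := Real.sq_sqrt (by positivity)
  have hrN : (0:ℝ) < r ^ N := pow_pos (by linarith) N
  have hsrN : s ^ N = (r ^ N) ^ 2 := by rw [hs, ← pow_mul, ← pow_mul, Nat.mul_comm]
  have hBlt : B < r ^ N := by nlinarith
  set D : ℝ := N * M ^ (N - 1) with hD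
  have hD0 : (0:ℝ) < D := by
    have : (0:ℝ) < (N:ℝ) := by exact_mod_cast hNpos
    have : (0:ℝ) < M ^ (N-1) := pow_pos (by linarith) _
    positivity
  refine ⟨(r ^ N - B) / D, div_pos (by linarith) hD0, fun x => ?_⟩
  -- operator identity
  set y : H →L[ℂ] H := z • (1 : H →L[ℂ] H) with hy
  have hcomm : Commute T y := by
    rw [hy]
    exact (Commute.one_right T).smul_right z
  have hgeo := hcomm.geom_sum₂_mul N
  -- norm of the geometric sum
  have hsum : ‖∑ i ∈ range N, T ^ i * y ^ (N - 1 - i)‖ ≤ D := by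
    calc ‖∑ i ∈ range N, T ^ i * y ^ (N - 1 - i)‖
        ≤ ∑ i ∈ range N, ‖T ^ i * y ^ (N - 1 - i)‖ := norm_sum_le _ _
      _ ≤ ∑ i ∈ range N, M ^ (N - 1) := by
          apply Finset.sum_le_sum
          intro i hi
          have hi' : i ≤ N - 1 := Nat.le_sub_one_of_lt (mem_range.mp hi)
          have h1 : ‖T ^ i * y ^ (N - 1 - i)‖ ≤ ‖T ^ i‖ * ‖y ^ (N - 1 - i)‖ :=
            norm_mul_le _ _
          have h2 : ‖T ^ i‖ ≤ ‖T‖ ^ i := by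
            rcases Nat.eq_zero_or_pos i with h0 | h0
            · subst h0; simpa using (show ‖(1 : H →L[ℂ] H)‖ ≤ 1 from ContinuousLinearMap.norm_id_le)
            · exact norm_pow_le' T h0
          have h3 : ‖y ^ (N - 1 - i)‖ ≤ r ^ (N - 1 - i) := by
            rw [hy, smul_pow, one_pow, norm_smul, norm_pow]
            have : ‖(1 : H →L[ℂ] H)‖ ≤ 1 := ContinuousLinearMap.norm_id_le
            have hrk : (0:ℝ) ≤ r ^ (N - 1 - i) := by positivity
            nlinarith
          have h4 : ‖T‖ ^ i ≤ M ^ i := pow_le_pow_left₀ (norm_nonneg _) hMT i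
          have h5 : r ^ (N - 1 - i) ≤ M ^ (N - 1 - i) :=
            pow_le_pow_left₀ (by linarith) hMr _
          have h6 : M ^ i * M ^ (N - 1 - i) = M ^ (N - 1) := by
            rw [← pow_add, Nat.add_sub_cancel' hi']
          calc ‖T ^ i * y ^ (N - 1 - i)‖ ≤ ‖T ^ i‖ * ‖y ^ (N - 1 - i)‖ := h1
            _ ≤ M ^ i * M ^ (N - 1 - i) := by
                apply mul_le_mul (h2.trans h4) (h3.trans h5) (norm_nonneg _) (by positivity)
            _ = M ^ (N - 1) := h6
      _ = D := by rw [Finset.sum_const, card_range, nsmul_eq_mul]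
  -- apply the identity to x
  have happly : (T ^ N) x - z ^ N • x = (∑ i ∈ range N, T ^ i * y ^ (N - 1 - i)) ((T - y) x) := by
    have h := DFunLike.congr_fun hgeo x
    simp only [ContinuousLinearMap.mul_apply, sub_apply] at h
    rw [sub_apply, h, hy, smul_pow, one_pow, ContinuousLinearMap.smul_apply, ContinuousLinearMap.one_apply]
  have hb1 : ‖(T ^ N) x - z ^ N • x‖ ≤ D * ‖(T - y) x‖ := by
    rw [happly]
    exact (le_opNorm _ _).trans (mul_le_mul_of_nonneg_right hsum (norm_nonneg _))
  have hb2 : r ^ N * ‖x‖ ≤ ‖(T ^ N) x‖ + ‖(T ^ N) x - z ^ N • x‖ := by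
    have h := norm_sub_norm_le (z ^ N • x) ((T ^ N) x)
    rw [norm_sub_rev, norm_smul, norm_pow] at h
    linarith
  have hb3 : ‖(T ^ N) x‖ ≤ B * ‖x‖ := by
    have hg := hgrowth x N
    have hTx : ‖T x‖ ^ 2 ≤ K * ‖x‖ ^ 2 := by
      have h := T.le_opNorm x
      nlinarith [norm_nonneg (T x), norm_nonneg x, norm_nonneg T]
    have hNnn : (0:ℝ) ≤ (N:ℝ) := Nat.cast_nonneg _
    have hsq : ‖(T ^ N) x‖ ^ 2 ≤ (B * ‖x‖) ^ 2 := by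
      rw [mul_pow, hB2]
      nlinarith [sq_nonneg ‖x‖]
    nlinarith [norm_nonneg ((T ^ N) x), mul_nonneg hBnn (norm_nonneg x)]
  rw [div_mul_eq_mul_div, div_le_iff₀ hD0]
  nlinarith [norm_nonneg ((T - y) x)]

end Aux

/-- Every concave operator (2-expansion) is weakly concave. -/
theorem stmt_4 {H : Type*} [NormedAddCommGroup H] [InnerProductSpace ℂ H] [CompleteSpace H]
    (T : H →L[ℂ] H)
    (hconc : (2 • (adjoint T * T) - 1 - (adjoint T) ^ 2 * T ^ 2).IsPositive) :
    (∃ L : H →L[ℂ] H, L * T = 1) ∧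
    approxPointSpectrum T ⊆ Metric.sphere (0 : ℂ) 1 ∧
    (∀ x : H, ‖x‖ ≤ ‖T x‖) ∧
    (∀ x : H, ‖(cauchyDual T * adjoint T) x‖ ≤ ‖(cauchyDual T * T) x‖) := by
  have key := key_of_conc T hconc
  have hexp : ∀ x : H, ‖x‖ ≤ ‖T x‖ := expansive T key
  have hU : IsUnit (adjoint T * T) := aux_unit T hexp
  refine ⟨?_, ?_, hexp, ?_⟩
  · refine ⟨Ring.inverse (adjoint T * T) * adjoint T, ?_⟩
    rw [mul_assoc]
    exact Ring.inverse_mul_cancel _ hU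
  · intro z hz
    rw [mem_sphere_zero_iff_norm]
    by_contra h1
    rcases lt_or_gt_of_ne h1 with hlt | hgt
    · exact hz (aux_ltone T hexp z hlt)
    · exact hz (aux_gtone T (growth T key) z hgt)
  · have := aux_dual T key hU
    simpa [cauchyDual] using this
end

section
/- If T is an invertible bounded operator on a Hilbert space such that σ(T) ⊆ ∂𝔻 and T^{*-1} is hyponormal, then T is unitary. -/
set_option maxHeartbeats 1000000


open ContinuousLinearMap

local notation "⟪" x ", " y "⟫" => @inner ℂ _ _ x y

open scoped NNReal ENNReal

section Aux

variable {H : Type*} [NormedAddCommGroup H] [InnerProductSpace ℂ H] [CompleteSpace H]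

/-- A hyponormal operator satisfies `‖S* x‖ ≤ ‖S x‖`. -/
lemma hypo_apply_le {S : H →L[ℂ] H}
    (hp : (adjoint S * S - S * adjoint S).IsPositive) (x : H) :
    ‖adjoint S x‖ ≤ ‖S x‖ := by
  have h := hp.inner_nonneg_left x
  simp only [sub_apply, mul_apply, inner_sub_left, map_sub] at h
  have e1 : RCLike.re ⟪(adjoint S) (S x), x⟫ = ‖S x‖ ^ 2 := by
    rw [adjoint_inner_left, inner_self_eq_norm_sq]
  have e2 : RCLike.re ⟪S ((adjoint S) x), x⟫ = ‖(adjoint S) x‖ ^ 2 := by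
    rw [inner_re_symm, ← adjoint_inner_left S, inner_self_eq_norm_sq]
  have h' : 0 ≤ RCLike.re ⟪(adjoint S) (S x), x⟫ - RCLike.re ⟪S ((adjoint S) x), x⟫ := by
    rw [← map_sub]; exact (Complex.nonneg_iff.mp h).1
  rw [e1, e2] at h'
  nlinarith [norm_nonneg (S x), norm_nonneg ((adjoint S) x)]

/-- A hyponormal operator whose spectrum is contained in the unit circle has norm at most 1. -/
lemma hypo_norm_le_one (S : H →L[ℂ] H)
    (hp : (adjoint S * S - S * adjoint S).IsPositive)
    (hs : spectrum ℂ S ⊆ Metric.sphere (0 : ℂ) 1) : ‖S‖ ≤ 1 := by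
  -- log-convexity of n ↦ ‖Sⁿ x‖
  have step1 : ∀ (m : ℕ) (x : H),
      ‖(S ^ (m + 1)) x‖ ^ 2 ≤ ‖(S ^ (m + 2)) x‖ * ‖(S ^ m) x‖ := by
    intro m x
    have hpow1 : (S ^ (m + 1)) x = S ((S ^ m) x) := by
      rw [pow_succ']; rfl
    have hpow2 : (S ^ (m + 2)) x = S ((S ^ (m + 1)) x) := by
      rw [show m + 2 = (m + 1) + 1 from rfl, pow_succ']; rfl
    calc ‖(S ^ (m + 1)) x‖ ^ 2
        = RCLike.re ⟪(S ^ (m + 1)) x, (S ^ (m + 1)) x⟫ := (inner_self_eq_norm_sq _).symm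
      _ = RCLike.re ⟪(adjoint S) ((S ^ (m + 1)) x), (S ^ m) x⟫ := by
          rw [adjoint_inner_left, ← hpow1]
      _ ≤ ‖(adjoint S) ((S ^ (m + 1)) x)‖ * ‖(S ^ m) x‖ := re_inner_le_norm _ _
      _ ≤ ‖S ((S ^ (m + 1)) x)‖ * ‖(S ^ m) x‖ :=
          mul_le_mul_of_nonneg_right (hypo_apply_le hp _) (norm_nonneg _)
      _ = ‖(S ^ (m + 2)) x‖ * ‖(S ^ m) x‖ := by rw [hpow2]
  -- ‖Sx‖ ‖Sⁿx‖ ≤ ‖Sⁿ⁺¹x‖ ‖x‖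
  have step2 : ∀ (n : ℕ) (x : H),
      ‖S x‖ * ‖(S ^ n) x‖ ≤ ‖(S ^ (n + 1)) x‖ * ‖x‖ := by
    intro n
    induction n with
    | zero => intro x; simp [mul_comm]
    | succ m ih =>
      intro x
      by_cases h0 : ‖(S ^ (m + 1)) x‖ = 0
      · rw [h0, mul_zero]; positivity
      · have hpos : 0 < ‖(S ^ (m + 1)) x‖ :=
          lt_of_le_of_ne (norm_nonneg _) (Ne.symm h0)
        rw [← mul_le_mul_iff_of_pos_right hpos]
        calc (‖S x‖ * ‖(S ^ (m + 1)) x‖) * ‖(S ^ (m + 1)) x‖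
            = ‖S x‖ * ‖(S ^ (m + 1)) x‖ ^ 2 := by ring
          _ ≤ ‖S x‖ * (‖(S ^ (m + 2)) x‖ * ‖(S ^ m) x‖) :=
              mul_le_mul_of_nonneg_left (step1 m x) (norm_nonneg _)
          _ = ‖(S ^ (m + 2)) x‖ * (‖S x‖ * ‖(S ^ m) x‖) := by ring
          _ ≤ ‖(S ^ (m + 2)) x‖ * (‖(S ^ (m + 1)) x‖ * ‖x‖) :=
              mul_le_mul_of_nonneg_left (ih x) (norm_nonneg _)
          _ = (‖(S ^ (m + 1 + 1)) x‖ * ‖x‖) * ‖(S ^ (m + 1)) x‖ := by ring_nf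
  -- ‖Sx‖ⁿ⁺¹ ≤ ‖Sⁿ⁺¹x‖ ‖x‖ⁿ
  have step3 : ∀ (n : ℕ) (x : H),
      ‖S x‖ ^ (n + 1) ≤ ‖(S ^ (n + 1)) x‖ * ‖x‖ ^ n := by
    intro n
    induction n with
    | zero => intro x; simp [pow_one]
    | succ m ih =>
      intro x
      calc ‖S x‖ ^ (m + 1 + 1) = ‖S x‖ ^ (m + 1) * ‖S x‖ := by ring
        _ ≤ (‖(S ^ (m + 1)) x‖ * ‖x‖ ^ m) * ‖S x‖ :=
            mul_le_mul_of_nonneg_right (ih x) (norm_nonneg _)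
        _ = (‖S x‖ * ‖(S ^ (m + 1)) x‖) * ‖x‖ ^ m := by ring
        _ ≤ (‖(S ^ (m + 2)) x‖ * ‖x‖) * ‖x‖ ^ m :=
            mul_le_mul_of_nonneg_right (step2 (m + 1) x)
              (pow_nonneg (norm_nonneg _) _)
        _ = ‖(S ^ (m + 1 + 1)) x‖ * ‖x‖ ^ (m + 1) := by ring
  -- ‖S‖ⁿ ≤ ‖Sⁿ‖
  have step4 : ∀ n : ℕ, 1 ≤ n → ‖S‖ ^ n ≤ ‖S ^ n‖ := by
    intro n hn
    have hc : (0 : ℝ) ≤ ‖S ^ n‖ ^ ((n : ℝ)⁻¹) := Real.rpow_nonneg (norm_nonneg _) _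
    have hcn : (‖S ^ n‖ ^ ((n : ℝ)⁻¹)) ^ n = ‖S ^ n‖ :=
      Real.rpow_inv_natCast_pow (norm_nonneg _) (by omega)
    have hS : ‖S‖ ≤ ‖S ^ n‖ ^ ((n : ℝ)⁻¹) := by
      refine S.opNorm_le_bound hc fun x => ?_
      have key : ‖S x‖ ^ n ≤ (‖S ^ n‖ ^ ((n : ℝ)⁻¹) * ‖x‖) ^ n := by
        rw [mul_pow, hcn]
        obtain ⟨m, rfl⟩ : ∃ m, n = m + 1 := ⟨n - 1, by omega⟩
        calc ‖S x‖ ^ (m + 1) ≤ ‖(S ^ (m + 1)) x‖ * ‖x‖ ^ m := step3 m x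
          _ ≤ (‖S ^ (m + 1)‖ * ‖x‖) * ‖x‖ ^ m :=
              mul_le_mul_of_nonneg_right ((S ^ (m + 1)).le_opNorm x)
                (pow_nonneg (norm_nonneg _) _)
          _ = ‖S ^ (m + 1)‖ * ‖x‖ ^ (m + 1) := by ring
      exact le_of_pow_le_pow_left₀ (by omega) (mul_nonneg hc (norm_nonneg _)) key
    calc ‖S‖ ^ n ≤ (‖S ^ n‖ ^ ((n : ℝ)⁻¹)) ^ n :=
          pow_le_pow_left₀ (norm_nonneg _) hS n
      _ = ‖S ^ n‖ := hcn
  -- ‖S‖ ≤ spectralRadius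
  have hrad : (‖S‖₊ : ℝ≥0∞) ≤ spectralRadius ℂ S := by
    refine ge_of_tendsto (spectrum.pow_nnnorm_pow_one_div_tendsto_nhds_spectralRadius S) ?_
    filter_upwards [Filter.eventually_ge_atTop 1] with n hn
    have h1 : ‖S‖₊ ^ n ≤ ‖S ^ n‖₊ := by
      rw [← NNReal.coe_le_coe]
      push_cast
      exact step4 n hn
    have hne : (n : ℝ) ≠ 0 := by positivity
    calc (‖S‖₊ : ℝ≥0∞) = ((‖S‖₊ : ℝ≥0∞) ^ (n : ℕ)) ^ (1 / (n : ℝ)) := by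
          rw [← ENNReal.rpow_natCast, ← ENNReal.rpow_mul, mul_one_div_cancel hne,
            ENNReal.rpow_one]
      _ ≤ ((‖S ^ n‖₊ : ℝ≥0∞)) ^ (1 / (n : ℝ)) := by
          refine ENNReal.rpow_le_rpow ?_ (by positivity)
          rw [← ENNReal.coe_pow]
          exact_mod_cast h1
  -- spectralRadius ≤ 1
  have hsp : spectralRadius ℂ S ≤ 1 := by
    refine iSup₂_le fun k hk => ?_
    have hk1 : ‖k‖ = 1 := mem_sphere_zero_iff_norm.mp (hs hk)
    have hk2 : ‖k‖₊ = 1 := NNReal.coe_injective (by simp [coe_nnnorm, hk1])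
    rw [hk2, ENNReal.coe_one]
  have : (‖S‖₊ : ℝ≥0∞) ≤ 1 := hrad.trans hsp
  have h2 : ‖S‖₊ ≤ 1 := by exact_mod_cast this
  exact_mod_cast h2

lemma aux_inv_le (u : (H →L[ℂ] H)ˣ)
    (h : (adjoint (↑u⁻¹ : H →L[ℂ] H) * ↑u⁻¹ - ↑u⁻¹ * adjoint (↑u⁻¹ : H →L[ℂ] H)).IsPositive) :
    (adjoint (↑u : H →L[ℂ] H) * ↑u - ↑u * adjoint (↑u : H →L[ℂ] H)).IsPositive := by
  let A := H →L[ℂ] H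
  let a : (H →L[ℂ] H)ˣ :=
    ⟨↑u⁻¹ * star (↑u⁻¹ : A), star (↑u : A) * ↑u, by
      calc (↑u⁻¹ * star (↑u⁻¹ : A)) * (star (↑u : A) * ↑u)
          = ↑u⁻¹ * (star ((↑u : A) * ↑u⁻¹) * ↑u) := by simp only [star_mul, mul_assoc]
        _ = 1 := by rw [u.mul_inv]; simp, by
      calc (star (↑u : A) * ↑u) * (↑u⁻¹ * star (↑u⁻¹ : A))
          = star (↑u : A) * (((↑u : A) * ↑u⁻¹) * star (↑u⁻¹ : A)) := by simp only [mul_assoc]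
        _ = 1 := by rw [u.mul_inv, one_mul, ← star_mul, u.inv_mul, star_one]⟩
  let b : (H →L[ℂ] H)ˣ :=
    ⟨star (↑u⁻¹ : A) * ↑u⁻¹, ↑u * star (↑u : A), by
      calc (star (↑u⁻¹ : A) * ↑u⁻¹) * ((↑u : A) * star (↑u : A))
          = star (↑u⁻¹ : A) * (((↑u⁻¹ : A) * ↑u) * star (↑u : A)) := by simp only [mul_assoc]
        _ = 1 := by rw [u.inv_mul, one_mul, ← star_mul, u.mul_inv, star_one], by
      calc ((↑u : A) * star (↑u : A)) * (star (↑u⁻¹ : A) * ↑u⁻¹)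
          = ↑u * (star ((↑u⁻¹ : A) * ↑u) * ↑u⁻¹) := by simp only [star_mul, mul_assoc]
        _ = 1 := by rw [u.inv_mul]; simp⟩
  have ha : (0 : A) ≤ ↑a := mul_star_self_nonneg _
  have hab : (↑a : A) ≤ ↑b := by
    have key : (star (↑u⁻¹ : A) * ↑u⁻¹ - ↑u⁻¹ * star (↑u⁻¹ : A)).IsPositive := by
      simpa only [star_eq_adjoint] using h
    exact key
  have hinv : (↑b⁻¹ : A) ≤ ↑a⁻¹ := CStarAlgebra.inv_le_inv ha hab
  have h2 : (star (↑u : A) * ↑u - (↑u : A) * star (↑u : A)).IsPositive := by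
    rw [← ContinuousLinearMap.le_def]
    exact hinv
  simpa only [star_eq_adjoint] using h2


end Aux

/-- If `T` is invertible with `σ(T) ⊆ ∂𝔻` and `T^{*-1}` is hyponormal, then `T` is unitary. -/
theorem stmt_5 {H : Type*} [NormedAddCommGroup H] [InnerProductSpace ℂ H] [CompleteSpace H]
    (T : H →L[ℂ] H) (hT : IsUnit T)
    (hs : spectrum ℂ T ⊆ Metric.sphere (0 : ℂ) 1)
    (hhyp : (adjoint (Ring.inverse (adjoint T)) * Ring.inverse (adjoint T)
      - Ring.inverse (adjoint T) * adjoint (Ring.inverse (adjoint T))).IsPositive) :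
    adjoint T * T = 1 ∧ T * adjoint T = 1 := by
  have hU : IsUnit (adjoint T) := by
    rw [← star_eq_adjoint]; exact hT.star
  obtain ⟨u, hu⟩ := hU
  have hSdef : Ring.inverse (adjoint T) = (↑u⁻¹ : H →L[ℂ] H) := by
    rw [← hu, Ring.inverse_unit]
  -- hyponormality of S := (T*)⁻¹
  have hpS : (adjoint (↑u⁻¹ : H →L[ℂ] H) * ↑u⁻¹ - ↑u⁻¹ * adjoint (↑u⁻¹ : H →L[ℂ] H)).IsPositive := by
    rw [← hSdef]; exact hhyp
  -- spectrum of T*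
  have hsT' : spectrum ℂ (adjoint T) ⊆ Metric.sphere (0 : ℂ) 1 := by
    rw [← star_eq_adjoint, spectrum.map_star]
    intro z hz
    have h1 := mem_sphere_zero_iff_norm.mp (hs (Set.mem_star.mp hz))
    rw [mem_sphere_zero_iff_norm]
    rwa [norm_star] at h1
  -- spectrum of S
  have hsS : spectrum ℂ ((↑u⁻¹ : H →L[ℂ] H)) ⊆ Metric.sphere (0 : ℂ) 1 := by
    rw [← spectrum.map_inv]
    intro z hz
    have h1 : z⁻¹ ∈ spectrum ℂ ((↑u : H →L[ℂ] H)) := Set.mem_inv.mp hz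
    rw [hu] at h1
    have h2 := mem_sphere_zero_iff_norm.mp (hsT' h1)
    rw [norm_inv] at h2
    rw [mem_sphere_zero_iff_norm]
    exact inv_eq_one.mp h2
  -- ‖S‖ ≤ 1
  have hnS : ‖(↑u⁻¹ : H →L[ℂ] H)‖ ≤ 1 := hypo_norm_le_one _ hpS hsS
  -- T* is hyponormal, via antitonicity of inversion on positive operators
  have hpA : (adjoint (adjoint T) * adjoint T - adjoint T * adjoint (adjoint T)).IsPositive := by
    have h := aux_inv_le u hpS
    rwa [hu] at h
  have hnA : ‖adjoint T‖ ≤ 1 := hypo_norm_le_one _ hpA hsT'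
  -- left inverse : (adjoint ↑u⁻¹) * T = 1
  have hTu : T = star (↑u : H →L[ℂ] H) := by rw [hu, ← star_eq_adjoint, star_star]
  have hRT : adjoint (↑u⁻¹ : H →L[ℂ] H) * T = 1 := by
    rw [← star_eq_adjoint, hTu, ← star_mul, u.mul_inv, star_one]
  -- T is an isometry
  have hiso : ∀ x : H, ‖T x‖ = ‖x‖ := by
    intro x
    refine le_antisymm ?_ ?_
    · calc ‖T x‖ ≤ ‖T‖ * ‖x‖ := T.le_opNorm x
        _ ≤ 1 * ‖x‖ := by
            refine mul_le_mul_of_nonneg_right ?_ (norm_nonneg _)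
            calc ‖T‖ = ‖adjoint T‖ := (adjoint.norm_map T).symm
              _ ≤ 1 := hnA
        _ = ‖x‖ := one_mul _
    · calc ‖x‖ = ‖(adjoint (↑u⁻¹ : H →L[ℂ] H) * T) x‖ := by rw [hRT]; simp
        _ = ‖(adjoint (↑u⁻¹ : H →L[ℂ] H)) (T x)‖ := rfl
        _ ≤ ‖adjoint (↑u⁻¹ : H →L[ℂ] H)‖ * ‖T x‖ := le_opNorm _ _
        _ ≤ 1 * ‖T x‖ := by
            refine mul_le_mul_of_nonneg_right ?_ (norm_nonneg _)
            calc ‖adjoint (↑u⁻¹ : H →L[ℂ] H)‖ = ‖(↑u⁻¹ : H →L[ℂ] H)‖ := adjoint.norm_map _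
              _ ≤ 1 := hnS
        _ = ‖T x‖ := one_mul _
  -- conclude T* T = 1
  have hf : ∀ x y : H, ⟪T x, T y⟫ = ⟪x, y⟫ := by
    intro x y
    exact LinearIsometry.inner_map_map ⟨(T : H →ₗ[ℂ] H), hiso⟩ x y
  have h1 : adjoint T * T = 1 := by
    ext x
    refine ext_inner_right ℂ fun y => ?_
    calc ⟪(adjoint T * T) x, y⟫ = ⟪(adjoint T) (T x), y⟫ := rfl
      _ = ⟪T x, T y⟫ := adjoint_inner_left T _ _
      _ = ⟪x, y⟫ := hf x y
      _ = ⟪(1 : H →L[ℂ] H) x, y⟫ := rfl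
  refine ⟨h1, ?_⟩
  -- T T* = 1 from invertibility
  obtain ⟨v, hv0⟩ := hT
  have hv : T * (↑v⁻¹ : H →L[ℂ] H) = 1 := by
    rw [← hv0]; exact v.mul_inv
  have hadj : adjoint T = (↑v⁻¹ : H →L[ℂ] H) := by
    calc adjoint T = adjoint T * (T * ↑v⁻¹) := by rw [hv, mul_one]
      _ = (adjoint T * T) * ↑v⁻¹ := by rw [mul_assoc]
      _ = ↑v⁻¹ := by rw [h1, one_mul]
  rw [hadj]
  exact hv
end

section
/- If T is an analytic bounded operator on a nonzero Hilbert space (i.e., the intersection of the ranges of all powers T^n is {0}) and σ_ap(T) ⊆ ∂𝔻, then T is completely non-normal, i.e., T has no nonzero reducing subspace on which it is normal. -/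
open ContinuousLinearMap
open scoped InnerProductSpace

/-- An analytic operator with approximate point spectrum in the unit circle is completely
non-normal: every closed reducing subspace on which `T` is normal is trivial. -/
theorem stmt_6 {H : Type*} [NormedAddCommGroup H] [InnerProductSpace ℂ H] [CompleteSpace H]
    [Nontrivial H] (T : H →L[ℂ] H)
    (han : (⨅ n : ℕ, LinearMap.range ((T ^ n : H →L[ℂ] H) : H →ₗ[ℂ] H)) = ⊥)
    (hap : approxPointSpectrum T ⊆ Metric.sphere (0 : ℂ) 1) :
    ∀ M : Submodule ℂ H, IsClosed (M : Set H) →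
      (∀ x ∈ M, T x ∈ M) → (∀ x ∈ M, adjoint T x ∈ M) →
      (∀ x ∈ M, adjoint T (T x) = T (adjoint T x)) → M = ⊥ := by
  intro M hMcl hTM hT'M hnorm
  -- T is bounded below
  have h0 : (0:ℂ) ∉ approxPointSpectrum T := by
    intro h; have := hap h; simp at this
  have hbd : ∃ c : ℝ, 0 < c ∧ ∀ x : H, c * ‖x‖ ≤ ‖T x‖ := by
    have := not_not.mp h0
    simpa using this
  obtain ⟨c, hc, hbd⟩ := hbd
  -- norm equality on M
  have hne : ∀ x ∈ M, ‖adjoint T x‖ = ‖T x‖ := by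
    intro x hx
    have h1 : ⟪T x, T x⟫_ℂ = ⟪adjoint T x, adjoint T x⟫_ℂ := by
      calc ⟪T x, T x⟫_ℂ = ⟪x, adjoint T (T x)⟫_ℂ := (adjoint_inner_right T x (T x)).symm
        _ = ⟪x, T (adjoint T x)⟫_ℂ := by rw [hnorm x hx]
        _ = ⟪adjoint T x, adjoint T x⟫_ℂ := (adjoint_inner_left T (adjoint T x) x).symm
    rw [inner_self_eq_norm_sq_to_K, inner_self_eq_norm_sq_to_K] at h1
    have h3 : ‖T x‖^2 = ‖adjoint T x‖^2 := by exact_mod_cast h1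
    nlinarith [norm_nonneg (T x), norm_nonneg (adjoint T x)]
  -- T(M) is closed
  have hanti : AntilipschitzWith (⟨c, hc.le⟩ : NNReal)⁻¹ T := by
    apply ContinuousLinearMap.antilipschitz_of_bound
    intro x
    show ‖x‖ ≤ c⁻¹ * ‖T x‖
    rw [← div_eq_inv_mul, le_div_iff₀ hc]
    linarith [hbd x]
  set K : Submodule ℂ H := M.map (T : H →ₗ[ℂ] H) with hK
  have hKM : K ≤ M := by
    rintro _ ⟨x, hx, rfl⟩; exact hTM x hx
  have hKcl : IsClosed (K : Set H) := by
    have : (K : Set H) = T '' (M : Set H) := rfl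
    rw [this]
    exact (hanti.isClosedEmbedding T.uniformContinuous).isClosedMap _ hMcl
  -- M ≤ K
  haveI : CompleteSpace K := hKcl.completeSpace_coe
  have hMK : M ≤ K := by
    intro x hx
    set y := x - (K.orthogonalProjectionOnto x : H) with hy
    have hyK : y ∈ Kᗮ := K.sub_starProjection_mem_orthogonal x
    have hyM : y ∈ M := M.sub_mem hx (hKM (K.orthogonalProjectionOnto x).2)
    have hT'y : adjoint T y = 0 := by
      have h1 : ⟪T (adjoint T y), y⟫_ℂ = 0 := hyK _ ⟨adjoint T y, hT'M y hyM, rfl⟩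
      have h2 : ⟪adjoint T y, adjoint T y⟫_ℂ = 0 := by
        rw [adjoint_inner_right]
        exact h1
      exact inner_self_eq_zero.mp h2
    have hy0 : y = 0 := by
      have h1 := hbd y
      rw [← hne y hyM, hT'y] at h1
      simp only [map_zero, norm_zero] at h1
      have : ‖y‖ ≤ 0 := by nlinarith [norm_nonneg y]
      exact norm_eq_zero.mp (le_antisymm this (norm_nonneg y))
    have : x = (K.orthogonalProjectionOnto x : H) := by
      rw [← sub_eq_zero]; exact hy0
    rw [this]; exact (K.orthogonalProjectionOnto x).2
  -- M ≤ range (T^n)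
  have hpow : ∀ n : ℕ, ∀ x ∈ M, ∃ y ∈ M, (T ^ n) y = x := by
    intro n
    induction n with
    | zero => intro x hx; exact ⟨x, hx, by simp⟩
    | succ n ih =>
      intro x hx
      obtain ⟨z, hz, rfl⟩ := hMK hx
      obtain ⟨w, hw, rfl⟩ := ih z hz
      exact ⟨w, hw, by rw [pow_succ']; rfl⟩
  rw [eq_bot_iff]
  intro x hx
  have : x ∈ ⨅ n : ℕ, LinearMap.range ((T ^ n : H →L[ℂ] H) : H →ₗ[ℂ] H) := by
    rw [Submodule.mem_iInf]
    intro n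
    obtain ⟨y, _, hy⟩ := hpow n x hx
    exact ⟨y, hy⟩
  rw [han] at this
  exact this
end

section
/- Let W be a unilateral weighted shift on ℓ² with positive weights (w_n) satisfying inf_n w_n > 0, and let k be a positive integer. Then W^k satisfies P ≤ W^{*k}(W^{*k}W^k)^{-1}W^k (where P is the orthogonal projection onto the closure of ran(W^k)) if and only if ∏_{j=0}^{k-1} w_{n+j}/w_{k+n+j} ≥ 1 for every integer n ≥ k. -/
open ContinuousLinearMap

open scoped ENNReal

open scoped lp

noncomputable section Aux

set_option linter.unusedSectionVars false

variable {H : Type*} [NormedAddCommGroup H] [InnerProductSpace ℂ H] [CompleteSpace H]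

local notation "⟪" x ", " y "⟫" => @inner ℂ _ _ x y

private lemma rpow_toReal_two (x : ℝ) : x ^ (2 : ℝ≥0∞).toReal = x ^ 2 := by
  rw [ENNReal.toReal_ofNat, show (2:ℝ) = ((2:ℕ):ℝ) by norm_num, Real.rpow_natCast]

private lemma vext (e : HilbertBasis ℕ ℂ H) {x y : H}
    (h : ∀ n, e.repr x n = e.repr y n) : x = y :=
  e.repr.injective (lp.ext (funext h))

private lemma clm_ext (e : HilbertBasis ℕ ℂ H) {A B : H →L[ℂ] H}
    (h : ∀ n, A (e n) = B (e n)) : A = B := by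
  refine ContinuousLinearMap.ext_on
    (Submodule.dense_iff_topologicalClosure_eq_top.2 e.dense_span) ?_
  rintro _ ⟨n, rfl⟩
  exact h n

private lemma summable_sq (f : ℓ²(ℕ, ℂ)) : Summable (fun n => ‖f n‖ ^ 2) := by
  have := (lp.memℓp f).summable (p := 2) (by norm_num)
  simpa only [rpow_toReal_two] using this

private lemma diag_mem (d : ℕ → ℝ) (M : ℝ) (hM : ∀ n, |d n| ≤ M) (f : ℓ²(ℕ, ℂ)) :
    Memℓp (fun n => (d n : ℂ) * f n) 2 := by
  rw [memℓp_gen_iff (by norm_num)]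
  simp only [rpow_toReal_two]
  have hsum : Summable (fun n => M ^ 2 * ‖f n‖ ^ 2) := (summable_sq f).mul_left _
  refine Summable.of_nonneg_of_le (fun n => by positivity) (fun n => ?_) hsum
  rw [norm_mul, Complex.norm_real, Real.norm_eq_abs, mul_pow]
  have h1 := hM n
  have h2 : (0:ℝ) ≤ |d n| := abs_nonneg _
  have h3 : (0:ℝ) ≤ ‖f n‖ := norm_nonneg _
  nlinarith [mul_le_mul h1 h1 h2 (le_trans h2 h1), sq_nonneg ‖f n‖]

/-- the diagonal operator with entries `d n` w.r.t. the Hilbert basis `e`. -/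
def diagOp (e : HilbertBasis ℕ ℂ H) (d : ℕ → ℝ) (M : ℝ) (hM : ∀ n, |d n| ≤ M) :
    H →L[ℂ] H :=
  LinearMap.mkContinuous
    { toFun := fun x => e.repr.symm ⟨fun n => (d n : ℂ) * e.repr x n, diag_mem d M hM _⟩
      map_add' := fun x y => e.repr.injective (by
        simp only [map_add, LinearIsometryEquiv.apply_symm_apply]
        apply lp.ext
        funext n
        simp only [map_add, lp.coeFn_add, Pi.add_apply]
        show (d n : ℂ) * (e.repr x n + e.repr y n) = _ * _ + _ * _
        ring)
      map_smul' := fun c x => e.repr.injective (by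
        simp only [map_smul, RingHom.id_apply, LinearIsometryEquiv.apply_symm_apply]
        apply lp.ext
        funext n
        simp only [lp.coeFn_smul, Pi.smul_apply, smul_eq_mul]
        show (d n : ℂ) * (c * e.repr x n) = c * (_ * _)
        ring) }
    M (fun x => by
      have hM0 : 0 ≤ M := le_trans (abs_nonneg _) (hM 0)
      simp only [LinearMap.coe_mk, AddHom.coe_mk, LinearIsometryEquiv.norm_map]
      have hx : ‖x‖ = ‖e.repr x‖ := (e.repr.norm_map x).symm
      rw [hx]
      refine lp.norm_le_of_forall_sum_le (by norm_num) (by positivity) (fun s => ?_)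
      have key := lp.sum_rpow_le_norm_rpow (p := 2) (by norm_num) (e.repr x) s
      simp only [rpow_toReal_two] at key ⊢
      rw [mul_pow]
      calc ∑ n ∈ s, ‖(⟨_, diag_mem d M hM (e.repr x)⟩ : ℓ²(ℕ, ℂ)) n‖ ^ 2
          = ∑ n ∈ s, ‖(d n : ℂ) * e.repr x n‖ ^ 2 := rfl
        _ ≤ ∑ n ∈ s, M ^ 2 * ‖e.repr x n‖ ^ 2 := by
            refine Finset.sum_le_sum (fun n _ => ?_)
            rw [norm_mul, Complex.norm_real, Real.norm_eq_abs, mul_pow]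
            have h1 := hM n
            have h2 : (0:ℝ) ≤ |d n| := abs_nonneg _
            have h3 : (0:ℝ) ≤ ‖(e.repr x) n‖ := norm_nonneg _
            nlinarith [mul_le_mul h1 h1 h2 (le_trans h2 h1), sq_nonneg ‖(e.repr x) n‖]
        _ = M ^ 2 * ∑ n ∈ s, ‖e.repr x n‖ ^ 2 := by rw [Finset.mul_sum]
        _ ≤ M ^ 2 * ‖e.repr x‖ ^ 2 :=
            mul_le_mul_of_nonneg_left key (by positivity))

lemma repr_diagOp (e : HilbertBasis ℕ ℂ H) (d : ℕ → ℝ) (M : ℝ) (hM : ∀ n, |d n| ≤ M)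
    (x : H) (n : ℕ) : e.repr (diagOp e d M hM x) n = (d n : ℂ) * e.repr x n := by
  have : diagOp e d M hM x = e.repr.symm ⟨fun n => (d n : ℂ) * e.repr x n, diag_mem d M hM _⟩ := rfl
  rw [this, LinearIsometryEquiv.apply_symm_apply]

lemma diagOp_apply_basis (e : HilbertBasis ℕ ℂ H) (d : ℕ → ℝ) (M : ℝ) (hM : ∀ n, |d n| ≤ M)
    (n : ℕ) : diagOp e d M hM (e n) = (d n : ℂ) • e n := by
  classical
  apply vext e
  intro m
  rw [repr_diagOp, map_smul, e.repr_self]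
  simp only [lp.coeFn_smul, Pi.smul_apply, smul_eq_mul]
  by_cases h : m = n
  · subst h; rw [lp.single_apply_self]
  · rw [lp.single_apply_ne _ _ _ h, mul_zero, mul_zero]


lemma inner_basis (e : HilbertBasis ℕ ℂ H) (x : H) (n : ℕ) :
    ⟪e n, x⟫ = e.repr x n := (e.repr_apply_apply x n).symm

lemma adjoint_eq_of (e : HilbertBasis ℕ ℂ H) (A B : H →L[ℂ] H)
    (h : ∀ n m, ⟪e n, A (e m)⟫ = ⟪B (e n), e m⟫) : adjoint B = A := by
  apply clm_ext e
  intro m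
  apply vext e
  intro n
  rw [← inner_basis, ← inner_basis, adjoint_inner_right, h]

lemma adjoint_diagOp (e : HilbertBasis ℕ ℂ H) (d : ℕ → ℝ) (M : ℝ) (hM : ∀ n, |d n| ≤ M) :
    adjoint (diagOp e d M hM) = diagOp e d M hM := by
  apply adjoint_eq_of e
  intro n m
  rw [diagOp_apply_basis, diagOp_apply_basis, inner_smul_right, inner_smul_left,
    Complex.conj_ofReal]
  rcases eq_or_ne n m with rfl | hne
  · rfl
  · rw [orthonormal_iff_ite.mp e.orthonormal, if_neg hne, mul_zero, mul_zero]

lemma isPositive_diagOp (e : HilbertBasis ℕ ℂ H) (d : ℕ → ℝ) (M : ℝ) (hM : ∀ n, |d n| ≤ M)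
    (h0 : ∀ n, 0 ≤ d n) : (diagOp e d M hM).IsPositive := by
  have hs : ∀ n, |Real.sqrt (d n)| ≤ Real.sqrt M := fun n => by
    rw [abs_of_nonneg (Real.sqrt_nonneg _)]
    exact Real.sqrt_le_sqrt ((le_abs_self _).trans (hM n))
  set B := diagOp e (fun n => Real.sqrt (d n)) (Real.sqrt M) hs with hB
  have hBB : diagOp e d M hM = B ∘L B := by
    apply clm_ext e
    intro n
    simp only [ContinuousLinearMap.comp_apply, hB, diagOp_apply_basis, map_smul,
      smul_smul]
    rw [← Complex.ofReal_mul, Real.mul_self_sqrt (h0 n)]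
  have hBadj : adjoint B = B := adjoint_diagOp e _ _ _
  constructor
  · rw [← isSelfAdjoint_iff_isSymmetric, IsSelfAdjoint, star_eq_adjoint, adjoint_diagOp]
  · intro x
    rw [reApplyInnerSelf_apply, hBB]
    have h1 : adjoint B (B x) = B (B x) := by rw [hBadj]
    have : ⟪(B ∘L B) x, x⟫ = ⟪B x, B x⟫ := by
      rw [ContinuousLinearMap.comp_apply, ← h1, adjoint_inner_left]
    rw [this]
    exact inner_self_nonneg

lemma mem_closure_of_coeff (e : HilbertBasis ℕ ℂ H) (S : Submodule ℂ H) (y : H)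
    (hS : ∀ n, e.repr y n ≠ 0 → e n ∈ S) : y ∈ S.topologicalClosure := by
  have : y ∈ closure (S : Set H) := by
    refine mem_closure_of_tendsto (e.hasSum_repr y) (Filter.Eventually.of_forall fun s => ?_)
    simp only [SetLike.mem_coe]
    refine Submodule.sum_mem _ fun n _ => ?_
    by_cases h : e.repr y n = 0
    · rw [h, zero_smul]; exact Submodule.zero_mem _
    · exact Submodule.smul_mem _ _ (hS n h)
  rwa [← SetLike.mem_coe, Submodule.topologicalClosure_coe]

lemma inner_eq_zero_on_closure (e : HilbertBasis ℕ ℂ H) (S : Submodule ℂ H) (n : ℕ)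
    (h : ∀ z ∈ S, ⟪e n, z⟫ = 0) : ∀ y ∈ S.topologicalClosure, ⟪e n, y⟫ = 0 := by
  intro y hy
  have hle : S ≤ LinearMap.ker (innerSL ℂ (e n) : H →ₗ[ℂ] ℂ) := by
    intro z hz
    simpa using h z hz
  have := Submodule.topologicalClosure_minimal S hle (ContinuousLinearMap.isClosed_ker _)
  simpa using this hy


lemma pow_shift_apply (e : HilbertBasis ℕ ℂ H) (w : ℕ → ℝ) (W : H →L[ℂ] H)
    (hW : ∀ n, W (e n) = (w n : ℂ) • e (n + 1)) (k : ℕ) (n : ℕ) :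
    (W ^ k) (e n) = ((∏ j ∈ Finset.range k, w (n + j) : ℝ) : ℂ) • e (n + k) := by
  induction k generalizing n with
  | zero => simp
  | succ k ih =>
    rw [pow_succ, ContinuousLinearMap.mul_apply, hW, map_smul, ih]
    rw [smul_smul]
    have : ∏ j ∈ Finset.range (k+1), w (n + j)
        = (∏ j ∈ Finset.range k, w (n + 1 + j)) * w n := by
      rw [Finset.prod_range_succ', Nat.add_zero]
      exact congrArg (· * w n)
        (Finset.prod_congr rfl fun j _ => by rw [show n + (j+1) = n + 1 + j by omega])
    rw [this, show n + 1 + k = n + (k + 1) by omega]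
    push_cast
    rw [mul_comm]

end Aux

local notation "⟪" x ", " y "⟫" => @inner ℂ _ _ x y


/-- For a unilateral weighted shift `W` (with respect to a Hilbert basis `e`) with positive
weights bounded below away from `0`, and `k ≥ 1`, the inequality
`P_{ran W^k} ≤ W^{*k}(W^{*k}W^k)⁻¹W^k` holds iff
`∏_{j<k} w_{n+j}/w_{k+n+j} ≥ 1` for all `n ≥ k`. -/
theorem stmt_7 {H : Type*} [NormedAddCommGroup H] [InnerProductSpace ℂ H] [CompleteSpace H]
    (e : HilbertBasis ℕ ℂ H) (w : ℕ → ℝ) (W : H →L[ℂ] H)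
    (hpos : ∀ n, 0 < w n) (hbdd : ∃ C : ℝ, ∀ n, w n ≤ C)
    (hinf : ∃ c : ℝ, 0 < c ∧ ∀ n, c ≤ w n)
    (hW : ∀ n, W (e n) = (w n : ℂ) • e (n + 1))
    (k : ℕ) (hk : 1 ≤ k) :
    (∀ P : H →L[ℂ] H, P * P = P → adjoint P = P →
        LinearMap.range (P : H →ₗ[ℂ] H) = (LinearMap.range ((W ^ k : H →L[ℂ] H) : H →ₗ[ℂ] H)).topologicalClosure →
        (adjoint (W ^ k) * Ring.inverse (adjoint (W ^ k) * W ^ k) * W ^ k - P).IsPositive)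
      ↔ ∀ n, k ≤ n → 1 ≤ ∏ j ∈ Finset.range k, w (n + j) / w (k + n + j) := by
  classical
  obtain ⟨C, hC⟩ := hbdd
  obtain ⟨c, hc0, hc⟩ := hinf
  set v : ℕ → ℝ := fun n => ∏ j ∈ Finset.range k, w (n + j) with hv
  have hv0 : ∀ n, 0 < v n := fun n => Finset.prod_pos fun j _ => hpos _
  have hvC : ∀ n, v n ≤ C ^ k := fun n => by
    calc v n ≤ ∏ j ∈ Finset.range k, C :=
          Finset.prod_le_prod (fun j _ => (hpos _).le) (fun j _ => hC _)
      _ = C ^ k := by rw [Finset.prod_const, Finset.card_range]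
  have hvc : ∀ n, c ^ k ≤ v n := fun n => by
    calc (c:ℝ) ^ k = ∏ j ∈ Finset.range k, c := by rw [Finset.prod_const, Finset.card_range]
      _ ≤ v n := Finset.prod_le_prod (fun j _ => hc0.le) (fun j _ => hc _)
  have hck : (0:ℝ) < c ^ k := pow_pos hc0 k
  have hWk : ∀ n, (W ^ k) (e n) = (v n : ℂ) • e (n + k) :=
    fun n => pow_shift_apply e w W hW k n
  have hvne : ∀ n, ((v n : ℂ)) ≠ 0 := fun n => by exact_mod_cast (hv0 n).ne'
  -- inner products of basis vectors
  have hee : ∀ i j : ℕ, inner ℂ (e i) (e j) = if i = j then 1 else 0 :=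
    fun i j => orthonormal_iff_ite.mp e.orthonormal i j
  -- the adjoint of W^k on basis vectors
  have hA1 : ∀ n, adjoint (W ^ k) (e (n + k)) = (v n : ℂ) • e n := by
    intro n
    apply vext e
    intro m
    rw [← inner_basis, ← inner_basis, adjoint_inner_right, hWk, inner_smul_left,
      inner_smul_right, hee, hee, Complex.conj_ofReal]
    by_cases h : m = n
    · subst h; rw [if_pos rfl, if_pos rfl]
    · rw [if_neg (by omega), if_neg h, mul_zero, mul_zero]
  have hA0 : ∀ m, m < k → adjoint (W ^ k) (e m) = 0 := by
    intro m hm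
    apply vext e
    intro n
    rw [← inner_basis, ← inner_basis, adjoint_inner_right, hWk, inner_smul_left, hee,
      if_neg (by omega), mul_zero, inner_zero_right]
  -- the inverse of S := adjoint (W^k) * W^k
  have hDb : ∀ n, |((v n ^ 2)⁻¹ : ℝ)| ≤ ((c ^ k) ^ 2)⁻¹ := by
    intro n
    rw [abs_of_nonneg (by positivity)]
    exact inv_anti₀ (by positivity) (pow_le_pow_left₀ hck.le (hvc n) 2)
  set Dinv := diagOp e (fun n => (v n ^ 2)⁻¹) (((c ^ k) ^ 2)⁻¹) hDb with hDinv
  have hSD : (adjoint (W ^ k) * W ^ k) * Dinv = 1 := by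
    apply clm_ext e
    intro n
    rw [ContinuousLinearMap.mul_apply, ContinuousLinearMap.mul_apply, hDinv,
      diagOp_apply_basis, map_smul, map_smul, hWk, map_smul, hA1,
      ContinuousLinearMap.one_apply, smul_smul, smul_smul]
    conv_rhs => rw [← one_smul ℂ (e n)]
    congr 1
    push_cast
    rw [sq, mul_assoc]
    exact inv_mul_cancel₀ (mul_ne_zero (hvne n) (hvne n))
  have hDS : Dinv * (adjoint (W ^ k) * W ^ k) = 1 := by
    apply clm_ext e
    intro n
    rw [ContinuousLinearMap.mul_apply, ContinuousLinearMap.mul_apply, hWk, map_smul, hA1,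
      map_smul, map_smul, hDinv, diagOp_apply_basis, ContinuousLinearMap.one_apply,
      smul_smul, smul_smul]
    conv_rhs => rw [← one_smul ℂ (e n)]
    congr 1
    push_cast
    rw [sq]
    exact mul_inv_cancel₀ (mul_ne_zero (hvne n) (hvne n))
  have hRinv : Ring.inverse (adjoint (W ^ k) * W ^ k) = Dinv :=
    Ring.inverse_unit ⟨adjoint (W ^ k) * W ^ k, Dinv, hSD, hDS⟩
  -- the operator T
  set t : ℕ → ℝ := fun n => v n ^ 2 / v (n + k) ^ 2 with ht
  have ht0 : ∀ n, 0 < t n := fun n => div_pos (pow_pos (hv0 n) 2) (pow_pos (hv0 _) 2)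
  have htb : ∀ n, |t n| ≤ (C ^ k) ^ 2 / (c ^ k) ^ 2 := by
    intro n
    rw [abs_of_nonneg (ht0 n).le]
    exact div_le_div₀ (by positivity) (pow_le_pow_left₀ (hv0 n).le (hvC n) 2) (by positivity)
      (pow_le_pow_left₀ hck.le (hvc _) 2)
  have hT : ∀ n, (adjoint (W ^ k) * Ring.inverse (adjoint (W ^ k) * W ^ k) * W ^ k) (e n)
      = ((t n : ℝ) : ℂ) • e n := by
    intro n
    rw [ContinuousLinearMap.mul_apply, ContinuousLinearMap.mul_apply, hWk, map_smul, hRinv,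
      hDinv, diagOp_apply_basis, map_smul, map_smul, hA1, smul_smul, smul_smul]
    congr 1
    rw [ht]
    push_cast
    field_simp [hvne (n + k)]
  -- basis membership in range
  have emem : ∀ n, e (n + k) ∈ LinearMap.range ((W ^ k : H →L[ℂ] H) : H →ₗ[ℂ] H) := by
    intro n
    rw [LinearMap.mem_range]
    refine ⟨(v n : ℂ)⁻¹ • e n, ?_⟩
    rw [map_smul, ContinuousLinearMap.coe_coe, hWk, smul_smul, inv_mul_cancel₀ (hvne n), one_smul]
  have hclos0 : ∀ m, m < k → ∀ y ∈ (LinearMap.range ((W ^ k : H →L[ℂ] H) : H →ₗ[ℂ] H)).topologicalClosure,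
      ⟪e m, y⟫ = 0 := by
    intro m hm
    apply inner_eq_zero_on_closure
    intro z hz
    rw [LinearMap.mem_range] at hz
    obtain ⟨x, rfl⟩ := hz
    rw [ContinuousLinearMap.coe_coe, ← adjoint_inner_left, hA0 m hm, inner_zero_left]
  -- the action of any orthogonal projection onto the closure of the range
  have hPhigh : ∀ P : H →L[ℂ] H, P * P = P →
      LinearMap.range (P : H →ₗ[ℂ] H) = (LinearMap.range ((W ^ k : H →L[ℂ] H) : H →ₗ[ℂ] H)).topologicalClosure →
      ∀ n, P (e (n + k)) = e (n + k) := by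
    intro P hP2 hrange n
    have hmem : e (n + k) ∈ LinearMap.range (P : H →ₗ[ℂ] H) := by
      rw [hrange]
      exact Submodule.le_topologicalClosure _ (emem n)
    rw [LinearMap.mem_range] at hmem
    obtain ⟨y, hy⟩ := hmem
    rw [← hy, ContinuousLinearMap.coe_coe, ← ContinuousLinearMap.mul_apply, hP2]
  have hPlow : ∀ P : H →L[ℂ] H, adjoint P = P →
      LinearMap.range (P : H →ₗ[ℂ] H) = (LinearMap.range ((W ^ k : H →L[ℂ] H) : H →ₗ[ℂ] H)).topologicalClosure →
      ∀ m, m < k → P (e m) = 0 := by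
    intro P hPadj hrange m hm
    apply vext e
    intro n
    have h1 : ⟪e n, P (e m)⟫ = ⟪P (e n), e m⟫ := by
      conv_lhs => rw [← hPadj]
      rw [adjoint_inner_right]
    have h2 : ⟪e m, P (e n)⟫ = 0 := by
      refine hclos0 m hm _ ?_
      rw [← hrange]
      exact LinearMap.mem_range.2 ⟨e n, rfl⟩
    have h3 : ⟪P (e n), e m⟫ = 0 := by
      rw [← inner_conj_symm, h2, map_zero]
    rw [← inner_basis, h1, h3, map_zero]
    simp
  -- indicator sequence
  set χ : ℕ → ℝ := fun n => if k ≤ n then (1:ℝ) else 0 with hχ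
  have hχb : ∀ n, |χ n| ≤ 1 := by
    intro n
    rw [hχ]
    dsimp only
    split <;> norm_num
  have hχ0 : ∀ n, 0 ≤ χ n := by
    intro n
    rw [hχ]
    dsimp only
    split <;> norm_num
  -- product identity
  have hprod : ∀ n, ∏ j ∈ Finset.range k, w (n + j) / w (k + n + j) = v n / v (n + k) := by
    intro n
    rw [Finset.prod_div_distrib]
    congr 1
    exact Finset.prod_congr rfl fun j _ => by rw [show k + n + j = n + k + j by omega]
  constructor
  · -- forward direction
    intro hyp n hn
    set Pp := diagOp e χ 1 hχb with hPp
    have hPp2 : Pp * Pp = Pp := by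
      apply clm_ext e
      intro m
      rw [ContinuousLinearMap.mul_apply, hPp, diagOp_apply_basis, map_smul, diagOp_apply_basis,
        smul_smul, ← Complex.ofReal_mul]
      congr 2
      rw [hχ]
      dsimp only
      split <;> norm_num
    have hPpadj : adjoint Pp = Pp := by rw [hPp]; exact adjoint_diagOp e χ 1 hχb
    have hPprange : LinearMap.range (Pp : H →ₗ[ℂ] H) = (LinearMap.range ((W ^ k : H →L[ℂ] H) : H →ₗ[ℂ] H)).topologicalClosure := by
      apply le_antisymm
      · rintro x hx
        rw [LinearMap.mem_range] at hx
        obtain ⟨y, rfl⟩ := hx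
        apply mem_closure_of_coeff
        intro m hm
        by_cases hkm : k ≤ m
        · obtain ⟨j, rfl⟩ : ∃ j, m = j + k := ⟨m - k, by omega⟩
          exact emem j
        · exfalso
          apply hm
          rw [hPp, ContinuousLinearMap.coe_coe, repr_diagOp, hχ]
          dsimp only
          rw [if_neg hkm]
          simp
      · intro x hx
        rw [LinearMap.mem_range]
        refine ⟨x, ?_⟩
        apply vext e
        intro m
        rw [hPp, ContinuousLinearMap.coe_coe, repr_diagOp]
        by_cases hkm : k ≤ m
        · rw [hχ]
          dsimp only
          rw [if_pos hkm]
          simp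
        · have h0 : e.repr x m = 0 := by
            rw [← inner_basis]
            exact hclos0 m (by omega) x hx
          rw [h0, mul_zero]
    have hpos' := hyp Pp hPp2 hPpadj hPprange
    obtain ⟨m, rfl⟩ : ∃ m, n = m + k := ⟨n - k, by omega⟩
    have h2 := hpos'.2 (e (m + k))
    rw [ContinuousLinearMap.reApplyInnerSelf_apply, ContinuousLinearMap.sub_apply, hT, hPp,
      diagOp_apply_basis] at h2
    rw [show χ (m + k) = 1 from if_pos (by omega)] at h2
    rw [← sub_smul, ← Complex.ofReal_sub,
      inner_smul_left, hee, if_pos rfl, mul_one, Complex.conj_ofReal] at h2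
    have h3 : (1:ℝ) ≤ t (m + k) := by
      have h4 : (0:ℝ) ≤ t (m + k) - 1 := by simpa using h2
      linarith
    rw [hprod (m + k), le_div_iff₀ (hv0 (m + k + k)), one_mul]
    rw [ht] at h3
    dsimp only at h3
    rw [le_div_iff₀ (pow_pos (hv0 (m + k + k)) 2), one_mul] at h3
    nlinarith [hv0 (m + k), hv0 (m + k + k)]
  · -- backward direction
    intro hcond P hP2 hPadj hrange
    set dd : ℕ → ℝ := fun n => t n - χ n with hdd
    have hdd0 : ∀ n, 0 ≤ dd n := by
      intro n
      rw [hdd]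
      dsimp only
      by_cases hkn : k ≤ n
      · rw [hχ]
        dsimp only
        rw [if_pos hkn]
        have hr := hcond n hkn
        rw [hprod n, le_div_iff₀ (hv0 (n + k)), one_mul] at hr
        rw [ht]
        dsimp only
        rw [le_sub_iff_add_le, le_div_iff₀ (pow_pos (hv0 (n + k)) 2)]
        nlinarith [hv0 (n + k), hv0 n]
      · rw [hχ]
        dsimp only
        rw [if_neg hkn, sub_zero]
        exact (ht0 n).le
    have hddb : ∀ n, |dd n| ≤ (C ^ k) ^ 2 / (c ^ k) ^ 2 + 1 := by
      intro n
      rw [abs_of_nonneg (hdd0 n)]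
      have h1 := htb n
      have h2 := hχ0 n
      have h3 := abs_of_nonneg (ht0 n).le
      rw [hdd]
      dsimp only
      linarith [abs_nonneg (t n)]
    have hTP : adjoint (W ^ k) * Ring.inverse (adjoint (W ^ k) * W ^ k) * W ^ k - P
        = diagOp e dd ((C ^ k) ^ 2 / (c ^ k) ^ 2 + 1) hddb := by
      apply clm_ext e
      intro n
      rw [ContinuousLinearMap.sub_apply, hT, diagOp_apply_basis]
      by_cases hkn : k ≤ n
      · obtain ⟨m, rfl⟩ : ∃ m, n = m + k := ⟨n - k, by omega⟩
        rw [hPhigh P hP2 hrange m]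
        rw [show dd (m + k) = t (m + k) - 1 from by
          rw [hdd]; dsimp only; rw [hχ]; dsimp only; rw [if_pos (by omega)]]
        rw [Complex.ofReal_sub, Complex.ofReal_one, sub_smul, one_smul]
      · rw [hPlow P hPadj hrange n (by omega), sub_zero]
        rw [show dd n = t n from by
          rw [hdd]; dsimp only; rw [hχ]; dsimp only; rw [if_neg hkn, sub_zero]]
    rw [hTP]
    exact isPositive_diagOp e dd _ hddb hdd0
end

section
/- If p is a polynomial with real coefficients whose roots are all negative real numbers and whose leading coefficient is positive, then p(n) > 0 for all n ∈ ℤ₊ and the sequence (1/p(n))_{n≥0} is a Hausdorff moment sequence, i.e., there is a positive Borel measure μ on [0,1] with 1/p(n) = ∫ x^n dμ(x) for all n. -/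
open MeasureTheory
open scoped NNReal ENNReal

def HMS (a : ℕ → ℝ) : Prop :=
  ∃ μ : Measure ℝ, IsFiniteMeasure μ ∧ μ (Set.Icc (0:ℝ) 1)ᶜ = 0 ∧
    ∀ n : ℕ, a n = ∫ x in Set.Icc (0:ℝ) 1, x ^ n ∂μ

lemma hms_basic (a : ℝ) (ha : 0 < a) : HMS (fun n => 1 / (n + a)) := by
  have hrm : Measurable (fun x : ℝ => x ^ (a-1)) := by
    refine measurable_of_continuousOn_compl_singleton (0 : ℝ) ?_
    exact continuousOn_of_forall_continuousAt fun x hx =>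
      Real.continuousAt_rpow_const x (a-1) (Or.inl hx)
  set g : ℝ → ℝ≥0 := fun x => Real.toNNReal (x ^ (a-1)) with hg
  have hgm : Measurable g := hrm.real_toNNReal
  set ν : Measure ℝ := volume.restrict (Set.Ioc 0 1) with hν
  have hint : IntegrableOn (fun x : ℝ => x ^ (a-1)) (Set.Ioc 0 1) :=
    (intervalIntegral.intervalIntegrable_rpow' (by linarith : (-1:ℝ) < a-1)).1
  have hcoe : ∀ x : ℝ, ((g x : ℝ≥0) : ℝ≥0∞) = ENNReal.ofReal (x ^ (a-1)) := fun x => rfl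
  have hnull : ν (Set.Icc (0:ℝ) 1)ᶜ = 0 := by
    rw [hν, Measure.restrict_apply' measurableSet_Ioc]
    have : (Set.Icc (0:ℝ) 1)ᶜ ∩ Set.Ioc 0 1 = ∅ := by
      ext x
      simp only [Set.mem_inter_iff, Set.mem_compl_iff, Set.mem_Icc, Set.mem_Ioc,
        Set.mem_empty_iff_false, iff_false, not_and]
      intro h h1 h2; exact h h1.le h2
    rw [this, measure_empty]
  refine ⟨ν.withDensity (fun x => (g x : ℝ≥0∞)), ⟨?_⟩, ?_, ?_⟩
  · rw [withDensity_apply _ MeasurableSet.univ, Measure.restrict_univ]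
    simp only [hcoe]
    exact hint.lintegral_lt_top
  · exact (withDensity_absolutelyContinuous ν _) hnull
  · intro n
    rw [restrict_withDensity measurableSet_Icc, Measure.restrict_restrict measurableSet_Icc,
      Set.inter_eq_right.mpr Set.Ioc_subset_Icc_self,
      integral_withDensity_eq_integral_smul hgm]
    have key : ∀ x ∈ Set.Ioc (0:ℝ) 1, g x • x ^ n = x ^ ((n:ℝ) + a - 1) := by
      intro x hx
      have hx0 : 0 < x := hx.1
      rw [NNReal.smul_def, smul_eq_mul, hg]
      simp only
      rw [Real.coe_toNNReal _ (Real.rpow_nonneg hx0.le _), ← Real.rpow_natCast x n,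
        ← Real.rpow_add hx0]
      ring_nf
    have hpos : (0:ℝ) < (n:ℝ) + a := by have := n.cast_nonneg (α := ℝ); linarith
    rw [setIntegral_congr_fun measurableSet_Ioc key,
      ← intervalIntegral.integral_of_le zero_le_one,
      integral_rpow (Or.inl (by linarith : (-1:ℝ) < (n:ℝ) + a - 1)),
      Real.one_rpow, Real.zero_rpow (by linarith : (n:ℝ) + a - 1 + 1 ≠ 0)]
    ring_nf

lemma hms_mul {a b : ℕ → ℝ} (ha : HMS a) (hb : HMS b) : HMS (fun n => a n * b n) := by
  obtain ⟨μ, hμf, hμn, hμi⟩ := ha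
  obtain ⟨ν, hνf, hνn, hνi⟩ := hb
  have hm : Measurable (fun q : ℝ × ℝ => q.1 * q.2) := measurable_fst.mul measurable_snd
  have hμr : μ.restrict (Set.Icc (0:ℝ) 1) = μ :=
    Measure.restrict_eq_self_of_ae_mem (mem_ae_iff.mpr hμn)
  have hνr : ν.restrict (Set.Icc (0:ℝ) 1) = ν :=
    Measure.restrict_eq_self_of_ae_mem (mem_ae_iff.mpr hνn)
  have hnull : Measure.map (fun q : ℝ × ℝ => q.1 * q.2) (μ.prod ν) (Set.Icc (0:ℝ) 1)ᶜ = 0 := by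
    rw [Measure.map_apply hm measurableSet_Icc.compl]
    refine measure_mono_null (t := ((Set.Icc (0:ℝ) 1)ᶜ ×ˢ Set.univ) ∪
      (Set.univ ×ˢ (Set.Icc (0:ℝ) 1)ᶜ)) ?_ (measure_union_null ?_ ?_)
    · intro q hq
      simp only [Set.mem_union, Set.mem_prod, Set.mem_univ, and_true, true_and,
        Set.mem_compl_iff]
      by_contra hc
      push_neg at hc
      obtain ⟨h1, h2⟩ := hc
      exact hq ⟨mul_nonneg h1.1 h2.1, mul_le_one₀ h1.2 h2.1 h2.2⟩
    · rw [Measure.prod_prod, hμn, zero_mul]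
    · rw [Measure.prod_prod, hνn, mul_zero]
  refine ⟨Measure.map (fun q : ℝ × ℝ => q.1 * q.2) (μ.prod ν), ⟨?_⟩, hnull, ?_⟩
  · rw [Measure.map_apply hm MeasurableSet.univ]
    exact (measure_mono (Set.subset_univ _)).trans_lt (measure_lt_top _ _)
  · intro n
    have hmr : (Measure.map (fun q : ℝ × ℝ => q.1 * q.2) (μ.prod ν)).restrict
        (Set.Icc (0:ℝ) 1) = Measure.map (fun q : ℝ × ℝ => q.1 * q.2) (μ.prod ν) :=
      Measure.restrict_eq_self_of_ae_mem (mem_ae_iff.mpr hnull)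
    rw [hmr, integral_map hm.aemeasurable (by fun_prop)]
    simp only [mul_pow]
    rw [integral_prod_mul (fun x : ℝ => x ^ n) (fun x : ℝ => x ^ n)]
    rw [hμi n, hνi n, hμr, hνr]


lemma hms_const (c : ℝ) (hc : 0 ≤ c) : HMS (fun _ => c) := by
  refine ⟨(ENNReal.ofReal c) • Measure.dirac 1,
    Measure.smul_finite _ ENNReal.ofReal_ne_top, ?_, ?_⟩
  · simp [Measure.dirac_apply' _ (measurableSet_Icc.compl)]
  · intro n
    rw [Measure.restrict_smul, integral_smul_measure,
      setIntegral_dirac (fun x : ℝ => x ^ n) 1 (Set.Icc 0 1)]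
    simp [ENNReal.toReal_ofReal hc]

lemma hms_prod (N : Multiset ℝ) : (∀ a ∈ N, 0 < a) → ∀ (c : ℝ), 0 ≤ c →
    HMS (fun n => c * (N.map (fun a => 1/((n:ℝ) + a))).prod) := by
  induction N using Multiset.induction_on with
  | empty => intro _ c hc; simpa using hms_const c hc
  | cons r N ih =>
    intro hN c hc
    have hr : 0 < r := hN r (Multiset.mem_cons_self r N)
    have ih' := ih (fun a ha => hN a (Multiset.mem_cons_of_mem ha)) c hc
    have key := hms_mul (hms_basic r hr) ih'
    convert key using 1
    funext n
    simp only [Multiset.map_cons, Multiset.prod_cons]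
    ring
lemma poly_fact (p : Polynomial ℝ) (hlead : 0 < p.leadingCoeff)
    (hroots : ∀ z : ℂ, Polynomial.aeval z p = 0 → ∃ r : ℝ, r < 0 ∧ z = (r : ℂ)) :
    ∃ N : Multiset ℝ, (∀ a ∈ N, 0 < a) ∧
      ∀ x : ℝ, p.eval x = p.leadingCoeff * (N.map (fun a => x + a)).prod := by
  have hp0 : p ≠ 0 := fun h => by simp [h] at hlead
  set f : ℝ →+* ℂ := algebraMap ℝ ℂ with hf
  set q : Polynomial ℂ := p.map f with hq
  have hq0 : q ≠ 0 := Polynomial.map_ne_zero hp0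
  have hfact := Polynomial.Splits.eq_prod_roots (IsAlgClosed.splits q)
  have hmem : ∀ z ∈ q.roots, ∃ r : ℝ, r < 0 ∧ z = (r : ℂ) := by
    intro z hz
    apply hroots
    have := (Polynomial.mem_roots hq0).1 hz
    rwa [Polynomial.IsRoot, hq, Polynomial.eval_map, ← Polynomial.aeval_def] at this
  refine ⟨q.roots.map (fun z => -z.re), ?_, ?_⟩
  · intro a ha
    obtain ⟨z, hz, rfl⟩ := Multiset.mem_map.1 ha
    obtain ⟨r, hr, hzr⟩ := hmem z hz
    rw [hzr]
    simpa using hr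
  · intro x
    have heval : q.eval ((x:ℝ) : ℂ) = ((p.eval x : ℝ) : ℂ) := by
      rw [hq, hf, Polynomial.eval_map, show ((x:ℝ):ℂ) = algebraMap ℝ ℂ x from rfl,
        Polynomial.eval₂_at_apply]
      rfl
    apply Complex.ofReal_injective
    rw [← heval]
    conv_lhs => rw [hfact]
    rw [Polynomial.eval_mul, Polynomial.eval_C, Polynomial.eval_multiset_prod,
      Multiset.map_map]
    have h1 : q.leadingCoeff = ((p.leadingCoeff : ℝ) : ℂ) := by
      rw [hq, Polynomial.leadingCoeff_map]; rfl
    have h2 : q.roots.map ((fun r => Polynomial.eval (↑x) r) ∘ fun z => Polynomial.X - Polynomial.C z)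
        = q.roots.map (fun z => (((x + -z.re : ℝ)) : ℂ)) := by
      refine Multiset.map_congr rfl ?_
      intro z hz
      obtain ⟨r, hr, hzr⟩ := hmem z hz
      simp only [Function.comp_apply, Polynomial.eval_sub, Polynomial.eval_X, Polynomial.eval_C]
      rw [hzr]
      have : ((r:ℂ)).re = r := Complex.ofReal_re r
      push_cast [this]
      ring
    rw [h2, h1, Complex.ofReal_mul]
    congr 1
    simp only [← Complex.ofRealHom_eq_coe]
    rw [map_multiset_prod Complex.ofRealHom, Multiset.map_map, Multiset.map_map]
    rfl

/-- If `p ∈ ℝ[x]` has only negative real roots and positive leading coefficient, then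
`p(n) > 0` for all `n ∈ ℤ₊` and `(1/p(n))ₙ` is a Hausdorff moment sequence. -/
theorem stmt_8 (p : Polynomial ℝ) (hlead : 0 < p.leadingCoeff)
    (hroots : ∀ z : ℂ, Polynomial.aeval z p = 0 → ∃ r : ℝ, r < 0 ∧ z = (r : ℂ)) :
    (∀ n : ℕ, 0 < p.eval (n : ℝ)) ∧
    ∃ μ : Measure ℝ, IsFiniteMeasure μ ∧ μ (Set.Icc (0 : ℝ) 1)ᶜ = 0 ∧
      ∀ n : ℕ, 1 / p.eval (n : ℝ) = ∫ x in Set.Icc (0 : ℝ) 1, x ^ n ∂μ := by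
  obtain ⟨N, hNpos, hNfact⟩ := poly_fact p hlead hroots
  have hterm : ∀ (n : ℕ) (a : ℝ), a ∈ N → 0 < (n:ℝ) + a := by
    intro n a ha
    have h1 := hNpos a ha
    have h2 : (0:ℝ) ≤ n := n.cast_nonneg
    linarith
  have hposn : ∀ n : ℕ, 0 < p.eval (n : ℝ) := by
    intro n
    rw [hNfact]
    refine mul_pos hlead (Multiset.prod_pos ?_)
    intro y hy
    obtain ⟨a, ha, rfl⟩ := Multiset.mem_map.1 hy
    exact hterm n a ha
  refine ⟨hposn, ?_⟩
  obtain ⟨μ, h1, h2, h3⟩ := hms_prod N hNpos (1 / p.leadingCoeff) (by positivity)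
  refine ⟨μ, h1, h2, fun n => ?_⟩
  rw [← h3 n, hNfact (n:ℝ)]
  simp only [one_div, mul_inv, Multiset.prod_map_inv]
end

section
/- If T is a bounded operator on a Hilbert space which is both concave (I - 2T*T + T*²T² ≤ 0) and an m-isometry for some m ≥ 2, then T is a 2-isometry, i.e., I - 2T*T + T*²T² = 0. -/
open Filter Topology

local notation "⟪" x ", " y "⟫" => @inner ℂ _ _ x y

lemma aux_tendsto_zero (r : ℕ) : ∀ (e : ℕ → ℝ), (∀ n, (fwdDiff 1)^[r] e n = 0) →
    Tendsto e atTop (𝓝 0) → ∀ n, e n = 0 := by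
  induction r with
  | zero => intro e h _ n; simpa using h n
  | succ r ih =>
    intro e h htend n
    have hd : ∀ m, fwdDiff 1 e m = 0 := by
      refine ih (fwdDiff 1 e) (fun m => ?_) ?_
      · have := h m
        rwa [Function.iterate_succ_apply] at this
      · have h1 : Tendsto (fun m => e (m + 1)) atTop (𝓝 0) :=
          htend.comp (tendsto_add_atTop_nat 1)
        unfold fwdDiff; simpa using h1.sub htend
    have hconst : ∀ m, e m = e 0 := by
      intro m
      induction m with
      | zero => rfl
      | succ m ih2 =>
        have := hd m
        simp only [fwdDiff] at this
        have : e (m + 1) = e m := by linarith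
        rw [this, ih2]
    have : Tendsto (fun _ : ℕ => e 0) atTop (𝓝 0) := Tendsto.congr hconst htend
    have h0 : e 0 = 0 := tendsto_nhds_unique tendsto_const_nhds this
    rw [hconst n, h0]

lemma aux_seq (m : ℕ) (hm : 2 ≤ m) (a : ℕ → ℝ) (h0 : ∀ n, 0 ≤ a n)
    (hΔm : ∀ n, (fwdDiff 1)^[m] a n = 0)
    (hcc : ∀ n, a (n + 2) - 2 * a (n + 1) + a n ≤ 0) :
    a 2 - 2 * a 1 + a 0 = 0 := by
  set d : ℕ → ℝ := fun n => a (n + 1) - a n with hd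
  have hdanti : ∀ n, d (n + 1) ≤ d n := by
    intro n; have := hcc n; simp only [hd]; ring_nf; ring_nf at this; linarith
  have hanti : Antitone d := antitone_nat_of_succ_le hdanti
  have hdpos : ∀ n, 0 ≤ d n := by
    intro N
    by_contra hneg
    push_neg at hneg
    have key : ∀ k : ℕ, a (N + k) ≤ a N + k * d N := by
      intro k; induction k with
      | zero => simp
      | succ k ih =>
        have h1 : d (N + k) ≤ d N := hanti (Nat.le_add_right N k)
        have h2 : a (N + k + 1) = a (N + k) + d (N + k) := by simp only [hd]; ring
        have : a (N + (k + 1)) = a (N + k) + d (N + k) := by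
          rw [← h2]; ring_nf
        rw [this]; push_cast; linarith
    obtain ⟨k, hk⟩ := exists_nat_gt (a N / (-d N))
    have hk' : a N < k * (-d N) := by
      rwa [div_lt_iff₀ (by linarith)] at hk
    have := key k
    have := h0 (N + k)
    linarith
  have hbdd : BddBelow (Set.range d) := ⟨0, fun x ⟨n, hn⟩ => hn ▸ hdpos n⟩
  have hconv : Tendsto d atTop (𝓝 (⨅ n, d n)) := tendsto_atTop_ciInf hanti hbdd
  have htend0 : Tendsto (fwdDiff 1 d) atTop (𝓝 0) := by
    have h1 : Tendsto (fun n => d (n + 1)) atTop (𝓝 (⨅ n, d n)) :=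
      hconv.comp (tendsto_add_atTop_nat 1)
    unfold fwdDiff; simpa using h1.sub hconv
  have hda : d = fwdDiff 1 a := rfl
  have hiter : ∀ n, (fwdDiff 1)^[m - 2] (fwdDiff 1 d) n = 0 := by
    intro n
    have h1 : (fwdDiff 1)^[m - 2 + 2] a n = 0 := by rw [Nat.sub_add_cancel hm]; exact hΔm n
    rw [Function.iterate_add_apply] at h1
    have h2 : (fwdDiff 1)^[2] a = fwdDiff 1 d := by rw [hda]; rfl
    rwa [h2] at h1
  have hzero := aux_tendsto_zero (m - 2) (fwdDiff 1 d) hiter htend0 0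
  simp only [fwdDiff, hd] at hzero
  ring_nf at hzero ⊢
  linarith

open ContinuousLinearMap

/-- A concave `m`-isometry (`m ≥ 2`) is a `2`-isometry. -/
theorem stmt_9 {H : Type*} [NormedAddCommGroup H] [InnerProductSpace ℂ H] [CompleteSpace H]
    (T : H →L[ℂ] H) (m : ℕ) (hm : 2 ≤ m)
    (hconc : (2 • (adjoint T * T) - 1 - (adjoint T) ^ 2 * T ^ 2).IsPositive)
    (hiso : ∑ k ∈ Finset.range (m + 1),
        ((-1 : ℂ) ^ k * (m.choose k : ℂ)) • ((adjoint T) ^ k * T ^ k) = 0) :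
    (1 : H →L[ℂ] H) - 2 • (adjoint T * T) + (adjoint T) ^ 2 * T ^ 2 = 0 := by
  have hadjk : ∀ k : ℕ, (adjoint T) ^ k = adjoint (T ^ k) := fun k => by
    rw [← star_eq_adjoint, ← star_eq_adjoint, ← star_pow]
  have hcast : ∀ r : ℝ, @RCLike.ofReal ℂ _ r = Complex.ofReal r := fun r => rfl
  set a : H → ℕ → ℝ := fun x n => ‖(T ^ n) x‖ ^ 2 with ha
  -- pointwise concavity
  have hcc0 : ∀ y : H, ‖y‖ ^ 2 + ‖(T ^ 2) y‖ ^ 2 - 2 * ‖T y‖ ^ 2 ≤ 0 := by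
    intro y
    have h := hconc.inner_nonneg_right y
    have hexp : ⟪y, ((2 • (adjoint T * T) - 1 - (adjoint T) ^ 2 * T ^ 2 : H →L[ℂ] H)) y⟫
        = ((2 * ‖T y‖ ^ 2 - ‖y‖ ^ 2 - ‖(T ^ 2) y‖ ^ 2 : ℝ) : ℂ) := by
      rw [two_smul]
      simp only [sub_apply, add_apply, ContinuousLinearMap.one_apply, ContinuousLinearMap.mul_apply, hadjk,
        inner_sub_right, inner_add_right, adjoint_inner_right,
        inner_self_eq_norm_sq_to_K]
      simp only [RCLike.ofReal, Algebra.cast, Complex.coe_algebraMap]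
      push_cast
      ring
    rw [hexp] at h
    simp only [RCLike.ofReal, Algebra.cast, Complex.coe_algebraMap, Complex.zero_le_real] at h
    linarith
  have hcc : ∀ (x : H) (n : ℕ), a x (n + 2) - 2 * a x (n + 1) + a x n ≤ 0 := by
    intro x n
    have h := hcc0 ((T ^ n) x)
    have e2 : (T ^ 2) ((T ^ n) x) = (T ^ (n + 2)) x := by
      rw [show n + 2 = 2 + n from by omega, pow_add, ContinuousLinearMap.mul_apply]
    have e1 : T ((T ^ n) x) = (T ^ (n + 1)) x := by
      rw [pow_succ', ContinuousLinearMap.mul_apply]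
    rw [e2, e1] at h
    simp only [ha]
    linarith
  -- m-isometry pointwise
  have hiso' : ∀ (x : H) (n : ℕ),
      ∑ k ∈ Finset.range (m + 1), (-1 : ℝ) ^ k * (m.choose k : ℝ) * a x (n + k) = 0 := by
    intro x n
    set y := (T ^ n) x with hy
    have h1 : ((∑ k ∈ Finset.range (m + 1),
        ((-1 : ℂ) ^ k * (m.choose k : ℂ)) • ((adjoint T) ^ k * T ^ k) : H →L[ℂ] H)) y = 0 := by
      rw [hiso]; rfl
    have h2 : ⟪y, ((∑ k ∈ Finset.range (m + 1),
        ((-1 : ℂ) ^ k * (m.choose k : ℂ)) • ((adjoint T) ^ k * T ^ k) : H →L[ℂ] H)) y⟫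
        = ∑ k ∈ Finset.range (m + 1),
          ((-1 : ℂ) ^ k * (m.choose k : ℂ)) * ((‖(T ^ k) y‖ ^ 2 : ℝ) : ℂ) := by
      rw [ContinuousLinearMap.sum_apply, inner_sum]
      refine Finset.sum_congr rfl fun k _ => ?_
      rw [smul_apply, inner_smul_right, ContinuousLinearMap.mul_apply, hadjk, adjoint_inner_right,
        inner_self_eq_norm_sq_to_K]
      simp only [RCLike.ofReal, Algebra.cast, Complex.coe_algebraMap]
      push_cast
      ring
    have h3 : ∑ k ∈ Finset.range (m + 1),
        ((-1 : ℂ) ^ k * (m.choose k : ℂ)) * ((‖(T ^ k) y‖ ^ 2 : ℝ) : ℂ) = 0 := by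
      rw [← h2, h1, inner_zero_right]
    have h4 : ((∑ k ∈ Finset.range (m + 1),
        (-1 : ℝ) ^ k * (m.choose k : ℝ) * ‖(T ^ k) y‖ ^ 2 : ℝ) : ℂ) = 0 := by
      rw [← h3]
      push_cast
      ring
    have h5 := Complex.ofReal_eq_zero.mp h4
    rw [← h5]
    refine Finset.sum_congr rfl fun k _ => ?_
    have : (T ^ (n + k)) x = (T ^ k) y := by
      rw [hy, show n + k = k + n from by omega, pow_add, ContinuousLinearMap.mul_apply]
    simp only [ha, this]
  -- forward differences vanish
  have hΔm : ∀ (x : H) (n : ℕ), (fwdDiff 1)^[m] (a x) n = 0 := by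
    intro x n
    rw [fwdDiff_iter_eq_sum_shift]
    have : ∑ k ∈ Finset.range (m + 1),
        ((-1 : ℤ) ^ (m - k) * (m.choose k : ℤ)) • (a x (n + k • 1))
        = (-1 : ℝ) ^ m * ∑ k ∈ Finset.range (m + 1),
          (-1 : ℝ) ^ k * (m.choose k : ℝ) * a x (n + k) := by
      rw [Finset.mul_sum]
      refine Finset.sum_congr rfl fun k hk => ?_
      have hk' : k ≤ m := Nat.lt_succ_iff.mp (Finset.mem_range.mp hk)
      have hkk : (-1 : ℝ) ^ k * (-1) ^ k = 1 := by rw [← mul_pow]; norm_num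
      have hmk : (-1 : ℝ) ^ (m - k) * (-1) ^ k = (-1) ^ m := by
        rw [← pow_add, Nat.sub_add_cancel hk']
      have hsign : (-1 : ℝ) ^ (m - k) = (-1) ^ m * (-1) ^ k := by
        calc (-1 : ℝ) ^ (m - k) = (-1) ^ (m - k) * ((-1) ^ k * (-1) ^ k) := by
              rw [hkk, mul_one]
          _ = ((-1) ^ (m - k) * (-1) ^ k) * (-1) ^ k := by ring
          _ = (-1) ^ m * (-1) ^ k := by rw [hmk]
      rw [zsmul_eq_mul, smul_eq_mul, mul_one]
      push_cast
      rw [hsign]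
      ring
    rw [this, hiso' x n, mul_zero]
  -- apply the real sequence lemma
  have key : ∀ x : H, a x 2 - 2 * a x 1 + a x 0 = 0 := fun x =>
    aux_seq m hm (a x) (fun n => by positivity) (hΔm x) (hcc x)
  -- conclude the operator is zero
  set S := (1 : H →L[ℂ] H) - 2 • (adjoint T * T) + (adjoint T) ^ 2 * T ^ 2 with hS
  have hSinner : ∀ x : H, ⟪S x, x⟫ = 0 := by
    intro x
    have hexp : ⟪S x, x⟫ = ((‖x‖ ^ 2 - 2 * ‖T x‖ ^ 2 + ‖(T ^ 2) x‖ ^ 2 : ℝ) : ℂ) := by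
      rw [hS, two_smul]
      simp only [add_apply, sub_apply, ContinuousLinearMap.one_apply, ContinuousLinearMap.mul_apply, hadjk,
        sum_inner, inner_add_left, inner_sub_left, adjoint_inner_left,
        inner_self_eq_norm_sq_to_K]
      simp only [RCLike.ofReal, Algebra.cast, Complex.coe_algebraMap]
      push_cast
      ring
    rw [hexp]
    have h := key x
    simp only [ha] at h
    have h1 : (T ^ 1) x = T x := by rw [pow_one]
    have h0 : (T ^ 0) x = x := by rw [pow_zero]; rfl
    rw [h1, h0] at h
    rw [Complex.ofReal_eq_zero]
    linarith
  have hlin : (S : H →ₗ[ℂ] H) = 0 := by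
    rw [← inner_map_self_eq_zero]
    intro x
    exact hSinner x
  exact ContinuousLinearMap.coe_injective (by rw [hlin]; rfl)
end

section
/- Let T be a left-invertible bounded operator on a Hilbert space, k ∈ ℤ₊, T' its Cauchy dual, and C_k = T'^{*k} T'^{k}. Then C_k is positive and invertible, and the restriction of T' to ran(T'^k) (which is T'-invariant and closed) is hyponormal if and only if C_k^{1/2} T' C_k^{-1/2} is hyponormal. -/
open ContinuousLinearMap

section helpers

variable {H : Type*} [NormedAddCommGroup H] [InnerProductSpace ℂ H] [CompleteSpace H]

local notation "⟪" x ", " y "⟫" => @inner ℂ _ _ x y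

/-- uniqueness of Ring.inverse -/
lemma aux_ring_inverse_eq {a b : H →L[ℂ] H} (ha : IsUnit a) (h : a * b = 1) :
    Ring.inverse a = b := by
  have h1 : Ring.inverse a * a = 1 := Ring.inverse_mul_cancel a ha
  calc Ring.inverse a = Ring.inverse a * (a * b) := by rw [h, mul_one]
    _ = (Ring.inverse a * a) * b := by rw [mul_assoc]
    _ = b := by rw [h1, one_mul]

lemma aux_isUnit_of_both {a b c : H →L[ℂ] H} (h1 : a * b = 1) (h2 : c * a = 1) : IsUnit a := by
  have hbc : c = b := by
    calc c = c * (a * b) := by rw [h1, mul_one]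
      _ = (c * a) * b := by rw [mul_assoc]
      _ = b := by rw [h2, one_mul]
  exact ⟨⟨a, b, h1, hbc ▸ h2⟩, rfl⟩

lemma aux_pow_left_inv {L S : H →L[ℂ] H} (h : L * S = 1) (k : ℕ) : L ^ k * S ^ k = 1 := by
  induction k with
  | zero => simp
  | succ n ih =>
    rw [pow_succ L, pow_succ' S, mul_assoc, ← mul_assoc L, h, one_mul, ih]

/-- A self-adjoint operator bounded below is invertible. -/
lemma aux_isUnit_of_bddBelow {A : H →L[ℂ] H} (hsa : IsSelfAdjoint A)
    {c : ℝ} (hc : 0 < c) (h : ∀ x, c * ‖x‖ ≤ ‖A x‖) : IsUnit A := by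
  rw [ContinuousLinearMap.isUnit_iff_bijective]
  have hker : ∀ x, A x = 0 → x = 0 := by
    intro x hx
    have := h x
    rw [hx, norm_zero] at this
    have hx0 : ‖x‖ ≤ 0 := by nlinarith
    simpa using le_antisymm hx0 (norm_nonneg x)
  constructor
  · intro x y hxy
    have h0 : A (x - y) = 0 := by rw [map_sub, hxy, sub_self]
    exact sub_eq_zero.mp (hker _ h0)
  · -- surjective
    have hanti : AntilipschitzWith (c⁻¹.toNNReal) A := by
      apply AntilipschitzWith.of_le_mul_dist
      intro x y
      have := h (x - y)
      have hd1 : dist x y = ‖x - y‖ := by rw [dist_eq_norm]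
      have hd2 : dist (A x) (A y) = ‖A (x - y)‖ := by rw [dist_eq_norm, map_sub]
      rw [hd1, hd2]
      have hcoe : (c⁻¹.toNNReal : ℝ) = c⁻¹ := Real.coe_toNNReal _ (by positivity)
      rw [hcoe]
      calc ‖x - y‖ = c⁻¹ * (c * ‖x - y‖) := by field_simp
        _ ≤ c⁻¹ * ‖A (x - y)‖ :=
            mul_le_mul_of_nonneg_left (h (x - y)) (by positivity)
    have hclosed : IsClosed (Set.range A) := hanti.isClosed_range (uniformContinuous_addMonoidHom_of_continuous A.cont)
    have hcl : IsClosed ((LinearMap.range (A : H →ₗ[ℂ] H) : Submodule ℂ H) : Set H) := by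
      simpa [LinearMap.coe_range] using hclosed
    haveI : CompleteSpace (LinearMap.range (A : H →ₗ[ℂ] H) : Submodule ℂ H) := hcl.completeSpace_coe
    have horth : (LinearMap.range (A : H →ₗ[ℂ] H) : Submodule ℂ H)ᗮ = ⊥ := by
      rw [Submodule.eq_bot_iff]
      intro v hv
      have hv' : ∀ x : H, ⟪A x, v⟫ = 0 := fun x =>
        hv (A x) (LinearMap.mem_range.mpr ⟨x, rfl⟩)
      have hAv : A v = 0 := by
        have h2 : ∀ x : H, ⟪x, A v⟫ = 0 := by
          intro x
          have := hv' x
          rwa [← hsa.adjoint_eq, adjoint_inner_left] at this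
        have := h2 (A v)
        simpa [inner_self_eq_zero] using this
      exact hker v hAv
    have htop : (LinearMap.range (A : H →ₗ[ℂ] H) : Submodule ℂ H) = ⊤ :=
      Submodule.orthogonal_eq_bot_iff.mp horth
    exact LinearMap.range_eq_top.mp htop

end helpers

section helpers2

variable {H : Type*} [NormedAddCommGroup H] [InnerProductSpace ℂ H] [CompleteSpace H]

local notation "⟪" x ", " y "⟫" => @inner ℂ _ _ x y

lemma aux_sq_norm_eq {a b : ℝ} (ha : 0 ≤ a) (hb : 0 ≤ b) (h : a ^ 2 = b ^ 2) : a = b := by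
  nlinarith

lemma aux_isPositive_star_mul_self (S : H →L[ℂ] H) : (adjoint S * S).IsPositive := by
  have := (isPositive_one (E := H)).adjoint_conj S
  simpa [← ContinuousLinearMap.mul_def, one_mul] using this

lemma aux_isUnit_star_mul_self {S : H →L[ℂ] H} (h : ∃ L, L * S = 1) :
    IsUnit (adjoint S * S) := by
  obtain ⟨L, hL⟩ := h
  have hsa : IsSelfAdjoint (adjoint S * S) := (aux_isPositive_star_mul_self S).isSelfAdjoint
  have hlow : ∀ x : H, (‖L‖ + 1)⁻¹ * ‖x‖ ≤ ‖S x‖ := by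
    intro x
    have h1 : ‖x‖ ≤ ‖L‖ * ‖S x‖ := by
      calc ‖x‖ = ‖L (S x)‖ := by
            have h0 : (L * S) x = (1 : H →L[ℂ] H) x := by rw [hL]
            rw [ContinuousLinearMap.mul_apply, ContinuousLinearMap.one_apply] at h0
            rw [h0]
        _ ≤ ‖L‖ * ‖S x‖ := L.le_opNorm _
    have h2 : ‖x‖ ≤ (‖L‖ + 1) * ‖S x‖ := by nlinarith [norm_nonneg (S x)]
    rw [inv_mul_le_iff₀ (by positivity)]
    linarith
  set c : ℝ := ((‖L‖ + 1)⁻¹) ^ 2 with hc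
  apply aux_isUnit_of_bddBelow hsa (c := c) (by positivity)
  intro x
  have key : c * ‖x‖ ^ 2 ≤ ‖(adjoint S * S) x‖ * ‖x‖ := by
    have h3 : RCLike.re ⟪(adjoint S * S) x, x⟫ = ‖S x‖ ^ 2 := by
      rw [ContinuousLinearMap.mul_apply, adjoint_inner_left, inner_self_eq_norm_sq]
    have h4 : RCLike.re ⟪(adjoint S * S) x, x⟫ ≤ ‖(adjoint S * S) x‖ * ‖x‖ := re_inner_le_norm _ _
    have h5 := hlow x
    nlinarith [norm_nonneg x, norm_nonneg (S x), mul_le_mul_of_nonneg_left h5 (le_of_lt (by positivity : (0:ℝ) < (‖L‖ + 1)⁻¹))]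
  rcases eq_or_lt_of_le (norm_nonneg x) with hx | hx
  · rw [← hx]; simp
  · calc c * ‖x‖ = (c * ‖x‖ ^ 2) / ‖x‖ := by field_simp [pow_two]
      _ ≤ (‖(adjoint S * S) x‖ * ‖x‖) / ‖x‖ := by
          gcongr
      _ = ‖(adjoint S * S) x‖ := by field_simp

end helpers2

local notation "⟪" x ", " y "⟫" => @inner ℂ _ _ x y

/-- `C_k = T'^{*k} T'^k`. -/
noncomputable def Cop {H : Type*} [NormedAddCommGroup H] [InnerProductSpace ℂ H]
    [CompleteSpace H] (T : H →L[ℂ] H) (k : ℕ) : H →L[ℂ] H :=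
  adjoint ((cauchyDual T) ^ k) * (cauchyDual T) ^ k

/-- The orthogonal projection onto `ran T'^k`, namely `T'^k C_k⁻¹ T'^{*k}`. -/
noncomputable def Pop {H : Type*} [NormedAddCommGroup H] [InnerProductSpace ℂ H]
    [CompleteSpace H] (T : H →L[ℂ] H) (k : ℕ) : H →L[ℂ] H :=
  (cauchyDual T) ^ k * Ring.inverse (Cop T k) * adjoint ((cauchyDual T) ^ k)

set_option maxHeartbeats 1600000 in
/-- For a left-invertible `T`, `C_k` is positive and invertible, and the restriction of `T'`
to `ran T'^k` is hyponormal iff `C_k^{1/2} T' C_k^{-1/2}` is hyponormal. -/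
theorem stmt_17 {H : Type*} [NormedAddCommGroup H] [InnerProductSpace ℂ H] [CompleteSpace H]
    (T : H →L[ℂ] H) (hli : ∃ L : H →L[ℂ] H, L * T = 1) (k : ℕ) :
    (Cop T k).IsPositive ∧ IsUnit (Cop T k) ∧
    ((∀ x : H,
        ‖(Pop T k) (adjoint (cauchyDual T) (((cauchyDual T) ^ k) x))‖
          ≤ ‖(cauchyDual T) (((cauchyDual T) ^ k) x)‖) ↔
      (adjoint (CFC.sqrt (Cop T k) * cauchyDual T * Ring.inverse (CFC.sqrt (Cop T k)))
          * (CFC.sqrt (Cop T k) * cauchyDual T * Ring.inverse (CFC.sqrt (Cop T k)))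
        - (CFC.sqrt (Cop T k) * cauchyDual T * Ring.inverse (CFC.sqrt (Cop T k)))
          * adjoint (CFC.sqrt (Cop T k) * cauchyDual T
              * Ring.inverse (CFC.sqrt (Cop T k)))).IsPositive) := by
  obtain ⟨L, hL⟩ := hli
  set T' : H →L[ℂ] H := cauchyDual T with hT'def
  set A : H →L[ℂ] H := T' ^ k with hAdef
  -- `T*T` is a unit
  have hB : IsUnit (adjoint T * T) := aux_isUnit_star_mul_self ⟨L, hL⟩
  -- left inverse of `T'`
  have hL' : ((adjoint T * T) * L) * T' = 1 := by
    rw [hT'def, cauchyDual, ← mul_assoc, mul_assoc (adjoint T * T) L T, hL, mul_one,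
      Ring.mul_inverse_cancel _ hB]
  -- left inverse of `A = T'^k`
  have hAk : ((adjoint T * T) * L) ^ k * A = 1 := aux_pow_left_inv hL' k
  have hCop : Cop T k = adjoint A * A := rfl
  have hCpos : (Cop T k).IsPositive := by rw [hCop]; exact aux_isPositive_star_mul_self A
  have hCunit : IsUnit (Cop T k) := by rw [hCop]; exact aux_isUnit_star_mul_self ⟨_, hAk⟩
  refine ⟨hCpos, hCunit, ?_⟩
  set C : H →L[ℂ] H := Cop T k with hCdef
  set R : H →L[ℂ] H := CFC.sqrt C with hRdef
  set iR : H →L[ℂ] H := Ring.inverse R with hiRdef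
  set iC : H →L[ℂ] H := Ring.inverse C with hiCdef
  have hC0 : (0 : H →L[ℂ] H) ≤ C := (ContinuousLinearMap.nonneg_iff_isPositive C).mpr hCpos
  have hRR : R * R = C := CFC.sqrt_mul_sqrt_self C hC0
  have hRpos : R.IsPositive := (ContinuousLinearMap.nonneg_iff_isPositive R).mp (CFC.sqrt_nonneg C)
  have hRsa : IsSelfAdjoint R := hRpos.isSelfAdjoint
  have hCsa : IsSelfAdjoint C := hCpos.isSelfAdjoint
  have hRunit : IsUnit R := by
    apply aux_isUnit_of_both (b := R * iC) (c := iC * R)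
    · rw [← mul_assoc, hRR, hiCdef, Ring.mul_inverse_cancel _ hCunit]
    · rw [mul_assoc, hRR, hiCdef, Ring.inverse_mul_cancel _ hCunit]
  have hiR1 : R * iR = 1 := Ring.mul_inverse_cancel R hRunit
  have hiR2 : iR * R = 1 := Ring.inverse_mul_cancel R hRunit
  have hiRsa : IsSelfAdjoint iR := by
    rw [IsSelfAdjoint, hiRdef, ← Ring.inverse_star, hRsa.star_eq]
  have hiC : iC = iR * iR := by
    apply aux_ring_inverse_eq hCunit
    rw [← hRR, mul_assoc, ← mul_assoc R iR iR, hiR1, one_mul, hiR1]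
  set S : H →L[ℂ] H := R * T' * iR with hSdef
  -- adjoint of S
  have hSadj : adjoint S = iR * adjoint T' * R := by
    rw [← ContinuousLinearMap.star_eq_adjoint, hSdef, star_mul, star_mul, hiRsa.star_eq,
      hRsa.star_eq, ContinuousLinearMap.star_eq_adjoint, mul_assoc]
  -- norm transfer : ‖R y‖ = ‖A y‖
  have keyR : ∀ y : H, ‖R y‖ = ‖A y‖ := by
    intro y
    apply aux_sq_norm_eq (norm_nonneg _) (norm_nonneg _)
    rw [← inner_self_eq_norm_sq (𝕜 := ℂ), ← inner_self_eq_norm_sq (𝕜 := ℂ)]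
    have h1 : ⟪R y, R y⟫ = ⟪y, (R * R) y⟫ := by
      nth_rewrite 1 [← hRsa.adjoint_eq]
      rw [adjoint_inner_left, ContinuousLinearMap.mul_apply]
    have h2 : ⟪A y, A y⟫ = ⟪y, (adjoint A * A) y⟫ := by
      rw [ContinuousLinearMap.mul_apply, adjoint_inner_right]
    rw [h1, h2, hRR, hCop]
  -- commutation of adjoints of powers
  have hcomm : adjoint A * adjoint T' = adjoint T' * adjoint A := by
    rw [← ContinuousLinearMap.star_eq_adjoint, ← ContinuousLinearMap.star_eq_adjoint,
      ← star_mul, ← star_mul, hAdef, pow_mul_comm']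
  have hAT : A * T' = T' * A := by rw [hAdef, ← pow_mul_comm']
  -- operator identity for the LHS composite
  have hop : (Pop T k) * (adjoint T' * A) = A * iC * (adjoint T' * C) := by
    show A * Ring.inverse C * adjoint A * (adjoint T' * A) = _
    rw [← hiCdef]
    rw [mul_assoc (A * iC) (adjoint A) _, ← mul_assoc (adjoint A) (adjoint T') A, hcomm,
      mul_assoc (adjoint T') (adjoint A) A, ← hCop]
  -- LHS quantities equal S-quantities at R x
  have hPnorm : ∀ x : H, ‖(Pop T k) (adjoint T' (A x))‖ = ‖adjoint S (R x)‖ := by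
    intro x
    have h1 : (Pop T k) (adjoint T' (A x)) = A (iC (adjoint T' (C x))) := by
      have := congrArg (fun f : H →L[ℂ] H => f x) hop
      simpa [ContinuousLinearMap.mul_apply] using this
    have h2 : adjoint S (R x) = iR (adjoint T' (C x)) := by
      rw [hSadj]
      have hRx : R (R x) = C x := by
        have := congrArg (fun f : H →L[ℂ] H => f x) hRR
        simpa [ContinuousLinearMap.mul_apply] using this
      simp [ContinuousLinearMap.mul_apply, hRx]
    have hRiC : R * iC = iR := by rw [hiC, ← mul_assoc, hiR1, one_mul]
    rw [h1, h2, ← keyR]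
    congr 1
    have := congrArg (fun f : H →L[ℂ] H => f (adjoint T' (C x))) hRiC
    simpa [ContinuousLinearMap.mul_apply] using this
  have hSnorm : ∀ x : H, ‖T' (A x)‖ = ‖S (R x)‖ := by
    intro x
    have hiRR : iR (R x) = x := by
      have := congrArg (fun f : H →L[ℂ] H => f x) hiR2
      simpa [ContinuousLinearMap.mul_apply] using this
    have h1 : S (R x) = R (T' x) := by
      rw [hSdef]
      simp [ContinuousLinearMap.mul_apply, hiRR]
    have h2 : A (T' x) = T' (A x) := by
      have := congrArg (fun f : H →L[ℂ] H => f x) hAT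
      simpa [ContinuousLinearMap.mul_apply] using this
    rw [h1, keyR, h2]
  have hRsurj : Function.Surjective R := (ContinuousLinearMap.isUnit_iff_bijective.mp hRunit).2
  have hD : ∀ z : H, (adjoint S * S - S * adjoint S).reApplyInnerSelf z
      = ‖S z‖ ^ 2 - ‖adjoint S z‖ ^ 2 := by
    intro z
    rw [ContinuousLinearMap.reApplyInnerSelf_apply, ContinuousLinearMap.sub_apply,
      inner_sub_left, map_sub]
    congr 1
    · rw [ContinuousLinearMap.mul_apply, adjoint_inner_left,
        inner_self_eq_norm_sq (𝕜 := ℂ)]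
    · rw [ContinuousLinearMap.mul_apply]
      nth_rewrite 1 [← adjoint_adjoint S]
      rw [adjoint_inner_left, inner_self_eq_norm_sq (𝕜 := ℂ)]
  have hDsa : IsSelfAdjoint (adjoint S * S - S * adjoint S) := by
    rw [IsSelfAdjoint]
    simp only [← ContinuousLinearMap.star_eq_adjoint, star_sub, star_mul, star_star]
  constructor
  · intro hlhs
    refine ⟨ContinuousLinearMap.isSelfAdjoint_iff_isSymmetric.mp hDsa, fun z => ?_⟩
    obtain ⟨x, rfl⟩ := hRsurj z
    rw [hD]
    have h1 := hlhs x
    rw [hPnorm x, hSnorm x] at h1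
    nlinarith [norm_nonneg (S (R x)), norm_nonneg (adjoint S (R x))]
  · intro hpos x
    have h1 := hpos.2 (R x)
    rw [hD] at h1
    rw [hPnorm x, hSnorm x]
    nlinarith [norm_nonneg (S (R x)), norm_nonneg (adjoint S (R x))]
end

section
/- Let T be a left-invertible operator on a Hilbert space with polar decomposition T = U|T| and Cauchy dual T'. Then the restriction of T' to the closure of its range is hyponormal if and only if |T|^{-1}U is hyponormal. -/
open ContinuousLinearMap

section aux

variable {H : Type*} [NormedAddCommGroup H] [InnerProductSpace ℂ H] [CompleteSpace H]

private lemma ring_inverse_eq {R : Type*} [MonoidWithZero R] {a b : R}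
    (h1 : a * b = 1) (h2 : b * a = 1) : Ring.inverse a = b := by
  have hu : IsUnit a := ⟨⟨a, b, h1, h2⟩, rfl⟩
  calc Ring.inverse a = Ring.inverse a * (a * b) := by rw [h1, mul_one]
    _ = (Ring.inverse a * a) * b := by rw [mul_assoc]
    _ = b := by rw [Ring.inverse_mul_cancel a hu, one_mul]

private lemma norm_isometry {U : H →L[ℂ] H} (h : star U * U = 1) (y : H) : ‖U y‖ = ‖y‖ := by
  have h1 : adjoint U (U y) = y := by
    have := congrArg (fun A : H →L[ℂ] H => A y) h
    simpa [ContinuousLinearMap.star_eq_adjoint, mul_apply] using this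
  have h2 : (inner ℂ (U y) (U y) : ℂ) = inner ℂ y y := by
    rw [← adjoint_inner_left, h1]
  have h3 : ‖U y‖ ^ 2 = ‖y‖ ^ 2 := by
    rw [← @inner_self_eq_norm_sq ℂ, ← @inner_self_eq_norm_sq ℂ, h2]
  nlinarith [norm_nonneg (U y), norm_nonneg y]

private lemma hyponormal_iff (N : H →L[ℂ] H) :
    (adjoint N * N - N * adjoint N).IsPositive ↔ ∀ y : H, ‖adjoint N y‖ ≤ ‖N y‖ := by
  have key : ∀ x : H, (adjoint N * N - N * adjoint N).reApplyInnerSelf x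
      = ‖N x‖ ^ 2 - ‖adjoint N x‖ ^ 2 := by
    intro x
    have e1 : (inner ℂ ((adjoint N * N) x) x : ℂ) = inner ℂ (N x) (N x) := by
      rw [ContinuousLinearMap.mul_apply, adjoint_inner_left]
    have e2 : (inner ℂ ((N * adjoint N) x) x : ℂ) = inner ℂ (adjoint N x) (adjoint N x) := by
      rw [ContinuousLinearMap.mul_apply, ← adjoint_inner_right]
    rw [ContinuousLinearMap.reApplyInnerSelf_apply, sub_apply, inner_sub_left, map_sub, e1, e2,
      @inner_self_eq_norm_sq ℂ, @inner_self_eq_norm_sq ℂ]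
  constructor
  · intro h y
    have := h.2 y
    rw [key] at this
    nlinarith [norm_nonneg (N y), norm_nonneg (adjoint N y)]
  · intro h
    constructor
    · rw [← ContinuousLinearMap.isSelfAdjoint_iff_isSymmetric]; simp only [IsSelfAdjoint, ← ContinuousLinearMap.star_eq_adjoint, star_sub, star_mul,
        star_star]
    · intro x
      rw [key]
      nlinarith [h x, norm_nonneg (N x), norm_nonneg (adjoint N x)]

end aux

/-- If `T = U|T|` is the polar decomposition of a left-invertible `T`, then the restriction
of `T'` to (the closure of) its range is hyponormal iff `|T|⁻¹ U` is hyponormal.  Here the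
restriction is hyponormal iff `‖P T'^* y‖ ≤ ‖T' y‖` for every `y` in the range of `T'`,
where `P = T' (T'^* T')⁻¹ T'^*` is the orthogonal projection onto the range of `T'`. -/
theorem stmt_18 {H : Type*} [NormedAddCommGroup H] [InnerProductSpace ℂ H] [CompleteSpace H]
    (T U M : H →L[ℂ] H)
    (hli : ∃ L : H →L[ℂ] H, L * T = 1)
    (hM : M.IsPositive) (hM2 : M * M = adjoint T * T) (hpolar : T = U * M) :
    ((∀ x : H,
        ‖(cauchyDual T * Ring.inverse (adjoint (cauchyDual T) * cauchyDual T)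
            * adjoint (cauchyDual T)) (adjoint (cauchyDual T) (cauchyDual T x))‖
          ≤ ‖cauchyDual T (cauchyDual T x)‖) ↔
      (adjoint (Ring.inverse M * U) * (Ring.inverse M * U)
        - (Ring.inverse M * U) * adjoint (Ring.inverse M * U)).IsPositive) := by
  obtain ⟨L, hL⟩ := hli
  have hMsa : star M = M := hM.isSelfAdjoint
  -- M is invertible
  have hcM : (L * U) * M = 1 := by rw [mul_assoc, ← hpolar, hL]
  have hbM : M * star (L * U) = 1 := by
    have := congrArg star hcM
    rwa [star_mul, hMsa, star_one] at this
  have hcb : L * U = star (L * U) := by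
    calc L * U = (L * U) * (M * star (L * U)) := by rw [hbM, mul_one]
      _ = ((L * U) * M) * star (L * U) := (mul_assoc _ _ _).symm
      _ = star (L * U) := by rw [hcM, one_mul]
  set Mi := Ring.inverse M with hMi
  have hMiM : Mi * M = 1 := by rw [hMi, ring_inverse_eq hbM (hcb ▸ hcM)]; rw [← hcb]; exact hcM
  have hMMi : M * Mi = 1 := by rw [hMi, ring_inverse_eq hbM (hcb ▸ hcM)]; exact hbM
  -- U is an isometry
  have hUeq : U = T * Mi := by
    calc U = U * (M * Mi) := by rw [hMMi, mul_one]
      _ = (U * M) * Mi := by rw [mul_assoc]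
      _ = T * Mi := by rw [← hpolar]
  have hMiSa : star Mi = Mi := by
    have h1 : Mi * M = 1 := hMiM
    have := congrArg star h1
    rw [star_mul, hMsa, star_one] at this
    -- this : M * star Mi = 1
    calc star Mi = (Mi * M) * star Mi := by rw [hMiM, one_mul]
      _ = Mi * (M * star Mi) := by rw [mul_assoc]
      _ = Mi := by rw [this, mul_one]
  have hUU : star U * U = 1 := by
    rw [hUeq, star_mul, hMiSa, ContinuousLinearMap.star_eq_adjoint]
    calc Mi * adjoint T * (T * Mi) = Mi * (adjoint T * T) * Mi := by noncomm_ring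
      _ = Mi * (M * M) * Mi := by rw [hM2]
      _ = (Mi * M) * (M * Mi) := by noncomm_ring
      _ = 1 := by rw [hMiM, hMMi, mul_one]
  -- compute the Cauchy dual
  have hinvMM : Ring.inverse (M * M) = Mi * Mi := by
    apply ring_inverse_eq
    · calc M * M * (Mi * Mi) = M * (M * Mi) * Mi := by noncomm_ring
        _ = 1 := by rw [hMMi, mul_one, hMMi]
    · calc Mi * Mi * (M * M) = Mi * (Mi * M) * M := by noncomm_ring
        _ = 1 := by rw [hMiM, mul_one, hMiM]
  have hCD : cauchyDual T = U * Mi := by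
    rw [cauchyDual, ← hM2, hinvMM, hpolar]
    calc U * M * (Mi * Mi) = U * (M * Mi) * Mi := by noncomm_ring
      _ = U * Mi := by rw [hMMi, mul_one]
  have hCDadj : adjoint (cauchyDual T) = Mi * star U := by
    rw [← ContinuousLinearMap.star_eq_adjoint, hCD, star_mul, hMiSa]
  have hCDstarCD : adjoint (cauchyDual T) * cauchyDual T = Mi * Mi := by
    rw [hCDadj, hCD]
    calc Mi * star U * (U * Mi) = Mi * (star U * U) * Mi := by noncomm_ring
      _ = Mi * Mi := by rw [hUU, mul_one]
  have hinv2 : Ring.inverse (adjoint (cauchyDual T) * cauchyDual T) = M * M := by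
    rw [hCDstarCD]
    apply ring_inverse_eq
    · calc Mi * Mi * (M * M) = Mi * (Mi * M) * M := by noncomm_ring
        _ = 1 := by rw [hMiM, mul_one, hMiM]
    · calc M * M * (Mi * Mi) = M * (M * Mi) * Mi := by noncomm_ring
        _ = 1 := by rw [hMMi, mul_one, hMMi]
  set N : H →L[ℂ] H := Ring.inverse M * U with hN
  have hNadj : adjoint N = star U * Mi := by
    rw [← ContinuousLinearMap.star_eq_adjoint, hN, ← hMi, star_mul, hMiSa]
  -- the big composite operator
  have hbig : cauchyDual T * Ring.inverse (adjoint (cauchyDual T) * cauchyDual T)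
      * adjoint (cauchyDual T) * (adjoint (cauchyDual T) * cauchyDual T)
      = U * (star U * (Mi * Mi)) := by
    rw [hinv2, hCDstarCD, hCDadj, hCD]
    calc U * Mi * (M * M) * (Mi * star U) * (Mi * Mi)
        = U * ((Mi * M) * (M * Mi)) * (star U * (Mi * Mi)) := by noncomm_ring
      _ = U * (star U * (Mi * Mi)) := by rw [hMiM, hMMi, one_mul, mul_one]
  have hnormL : ∀ x : H,
      ‖(cauchyDual T * Ring.inverse (adjoint (cauchyDual T) * cauchyDual T)
          * adjoint (cauchyDual T)) (adjoint (cauchyDual T) (cauchyDual T x))‖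
        = ‖adjoint N (Mi x)‖ := by
    intro x
    have e1 : (cauchyDual T * Ring.inverse (adjoint (cauchyDual T) * cauchyDual T)
        * adjoint (cauchyDual T)) (adjoint (cauchyDual T) (cauchyDual T x))
        = (U * (star U * (Mi * Mi))) x := by
      rw [← hbig]; simp [mul_apply]
    rw [e1]
    have e2 : (U * (star U * (Mi * Mi))) x = U ((star U * Mi) (Mi x)) := by
      simp [mul_apply]
    rw [e2, norm_isometry hUU, hNadj]
  have hnormR : ∀ x : H, ‖cauchyDual T (cauchyDual T x)‖ = ‖N (Mi x)‖ := by
    intro x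
    rw [hCD]
    have e : (U * Mi) ((U * Mi) x) = U ((Mi * U) (Mi x)) := by simp [mul_apply]
    rw [e, norm_isometry hUU, hN, ← hMi]
  rw [hyponormal_iff]
  constructor
  · intro h y
    have := h (M y)
    rw [hnormL, hnormR] at this
    have hMy : Mi (M y) = y := by
      have := congrArg (fun A : H →L[ℂ] H => A y) hMiM
      simpa [mul_apply] using this
    rwa [hMy] at this
  · intro h x
    rw [hnormL, hnormR]
    exact h (Mi x)
end

section
/- Let T be an expansive left-invertible operator (T*T ≥ I) on a Hilbert space, T' its Cauchy dual, C_k = T'^{*k}T'^{k}, and p_k = T'^k C_k^{-1} T'^{*k}. Then for every k ∈ ℤ₊: p_k is an orthogonal projection, p_k p_{k+1} = p_{k+1}, 0 ≤ p_{k+1} ≤ p_k ≤ I, and 0 ≤ C_{k+1} ≤ C_k ≤ I. -/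
open ContinuousLinearMap
set_option linter.unusedSectionVars false

/-- `p_k = T'^k C_k⁻¹ T'^{*k}`. -/
noncomputable def pop {H : Type*} [NormedAddCommGroup H] [InnerProductSpace ℂ H]
    [CompleteSpace H] (T : H →L[ℂ] H) (k : ℕ) : H →L[ℂ] H :=
  (cauchyDual T) ^ k * Ring.inverse (Cop T k) * adjoint ((cauchyDual T) ^ k)

section Aux

variable {H : Type*} [NormedAddCommGroup H] [InnerProductSpace ℂ H] [CompleteSpace H]

local notation "⟪" x ", " y "⟫" => @inner ℂ _ _ x y

open RCLike
open scoped NNReal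

lemma pos_adj_mul_self (A : H →L[ℂ] H) : (adjoint A * A).IsPositive := by
  constructor
  · rw [← ContinuousLinearMap.isSelfAdjoint_iff_isSymmetric, isSelfAdjoint_iff', ← star_eq_adjoint]
    simp [star_mul, star_eq_adjoint, adjoint_adjoint]
  · intro x
    simp only [reApplyInnerSelf, ContinuousLinearMap.mul_apply, adjoint_inner_left]
    exact inner_self_nonneg

lemma isPositive_of_idem (p : H →L[ℂ] H) (hsa : adjoint p = p) (hidem : p * p = p) :
    p.IsPositive := by
  have h : p = adjoint p * p := by rw [hsa, hidem]
  rw [h]; exact pos_adj_mul_self p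

variable (T : H →L[ℂ] H) (hexp : (adjoint T * T - 1).IsPositive)
include hexp

lemma hlow : ∀ x : H, ‖x‖ ^ 2 ≤ re ⟪(adjoint T * T) x, x⟫ := by
  intro x
  have h := hexp.2 x
  simp only [reApplyInnerSelf, sub_apply, ContinuousLinearMap.one_apply, inner_sub_left, map_sub] at h
  have h2 : re ⟪x, x⟫ = ‖x‖ ^ 2 := by
    rw [inner_self_eq_norm_sq]
  linarith

lemma hD_unit : IsUnit (adjoint T * T) := by
  refine isUnit_of_forall_le_norm_inner_map _ (c := (1:ℝ≥0)) one_pos fun x => ?_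
  calc ‖x‖ ^ 2 * (1:ℝ≥0) = ‖x‖ ^ 2 := by simp
    _ ≤ re ⟪(adjoint T * T) x, x⟫ := hlow T hexp x
    _ ≤ ‖⟪(adjoint T * T) x, x⟫‖ := re_le_norm _

lemma hE_sa : IsSelfAdjoint (Ring.inverse (adjoint T * T)) := by
  have hD_sa : IsSelfAdjoint (adjoint T * T) := (pos_adj_mul_self T).isSelfAdjoint
  rw [IsSelfAdjoint, ← Ring.inverse_star, hD_sa.star_eq]

lemma hadjT' : adjoint (cauchyDual T) = Ring.inverse (adjoint T * T) * adjoint T := by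
  rw [cauchyDual, ← star_eq_adjoint, star_mul, (hE_sa T hexp).star_eq, star_eq_adjoint]

lemma hT'dT : adjoint (cauchyDual T) * T = 1 := by
  rw [hadjT' T hexp, mul_assoc, Ring.inverse_mul_cancel _ (hD_unit T hexp)]

lemma hTdT' : adjoint T * cauchyDual T = 1 := by
  have h := congrArg star (hT'dT T hexp)
  simpa [star_mul, star_eq_adjoint, adjoint_adjoint] using h

lemma hC1eq : adjoint (cauchyDual T) * cauchyDual T = Ring.inverse (adjoint T * T) := by
  rw [hadjT' T hexp, mul_assoc, hTdT' T hexp, mul_one]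

lemma hleft : ∀ n : ℕ, (adjoint T) ^ n * (cauchyDual T) ^ n = 1 := by
  intro n
  induction n with
  | zero => simp
  | succ n ih =>
    rw [pow_succ (adjoint T), pow_succ' (cauchyDual T), mul_assoc,
      ← mul_assoc (adjoint T), hTdT' T hexp, one_mul, ih]

lemma hCsucc : ∀ n : ℕ, Cop T (n + 1) = adjoint (cauchyDual T) * Cop T n * cauchyDual T := by
  intro n
  rw [Cop, Cop, pow_succ, ← star_eq_adjoint, star_mul, star_eq_adjoint, star_eq_adjoint]
  simp only [mul_assoc]

lemma hC_unit : ∀ n : ℕ, IsUnit (Cop T n) := by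
  intro n
  rcases subsingleton_or_nontrivial H with hs | hn
  · have : Subsingleton (H →L[ℂ] H) := ⟨fun a b => by ext x; exact Subsingleton.elim _ _⟩
    exact (Subsingleton.elim (1 : H →L[ℂ] H) (Cop T n)) ▸ isUnit_one
  · set M : ℝ := ‖(adjoint T) ^ n‖ with hM
    have hM0 : 0 < M := by
      rw [hM, norm_pos_iff]
      intro h0
      have h1 := hleft T hexp n
      rw [h0, zero_mul] at h1
      exact one_ne_zero h1.symm
    have hb : ∀ x : H, ‖x‖ ≤ M * ‖((cauchyDual T) ^ n) x‖ := by
      intro x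
      have hx : ((adjoint T) ^ n) (((cauchyDual T) ^ n) x) = x := by
        rw [← ContinuousLinearMap.mul_apply, hleft T hexp n, ContinuousLinearMap.one_apply]
      calc ‖x‖ = ‖((adjoint T) ^ n) (((cauchyDual T) ^ n) x)‖ := by rw [hx]
        _ ≤ M * ‖((cauchyDual T) ^ n) x‖ := le_opNorm _ _
    have hc : (0:ℝ) < (M ^ 2)⁻¹ := by positivity
    refine isUnit_of_forall_le_norm_inner_map _ (c := ⟨(M ^ 2)⁻¹, hc.le⟩)
      (by exact_mod_cast hc) fun x => ?_
    have hval : ‖⟪(Cop T n) x, x⟫‖ = ‖((cauchyDual T) ^ n) x‖ ^ 2 := by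
      rw [Cop, ContinuousLinearMap.mul_apply, adjoint_inner_left, inner_self_eq_norm_sq_to_K]
      simp [← Complex.ofReal_pow]
    rw [hval]
    have h2 := hb x
    have h3 : ‖x‖ ^ 2 ≤ M ^ 2 * ‖((cauchyDual T) ^ n) x‖ ^ 2 := by
      nlinarith [norm_nonneg x, norm_nonneg (((cauchyDual T) ^ n) x)]
    have h4 : M ^ 2 * (M ^ 2)⁻¹ = 1 := mul_inv_cancel₀ (by positivity)
    change ‖x‖ ^ 2 * (M ^ 2)⁻¹ ≤ _
    nlinarith [h3, hc, h4]
lemma hone_sub_E : ((1 : H →L[ℂ] H) - Ring.inverse (adjoint T * T)).IsPositive := by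
  constructor
  · exact ((isPositive_one.isSelfAdjoint).sub (hE_sa T hexp)).isSymmetric
  · intro x
    simp only [reApplyInnerSelf, sub_apply, ContinuousLinearMap.one_apply, inner_sub_left, map_sub]
    set y := Ring.inverse (adjoint T * T) x with hy
    have hx : (adjoint T * T) y = x := by
      rw [hy, ← ContinuousLinearMap.mul_apply, Ring.mul_inverse_cancel _ (hD_unit T hexp), ContinuousLinearMap.one_apply]
    have h1 : re ⟪Ring.inverse (adjoint T * T) x, x⟫ = re ⟪(adjoint T * T) y, y⟫ := by
      conv_lhs => rw [← hy, ← hx]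
      exact inner_re_symm _ _
    have h2 : ‖y‖ ^ 2 ≤ re ⟪Ring.inverse (adjoint T * T) x, x⟫ := by
      rw [h1]; exact hlow T hexp y
    have h3 : re ⟪Ring.inverse (adjoint T * T) x, x⟫ ≤ ‖y‖ * ‖x‖ := by
      calc re ⟪Ring.inverse (adjoint T * T) x, x⟫ ≤ ‖⟪Ring.inverse (adjoint T * T) x, x⟫‖ :=
            re_le_norm _
        _ ≤ ‖Ring.inverse (adjoint T * T) x‖ * ‖x‖ := norm_inner_le_norm _ _
        _ = ‖y‖ * ‖x‖ := by rw [hy]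
    have h4 : re ⟪x, x⟫ = ‖x‖ ^ 2 := by rw [inner_self_eq_norm_sq]
    nlinarith [norm_nonneg x, norm_nonneg y, h2, h3]

lemma h1subC : ∀ n : ℕ, ((1 : H →L[ℂ] H) - Cop T n).IsPositive := by
  intro n
  induction n with
  | zero =>
    have : Cop T 0 = 1 := by simp [Cop, ← star_eq_adjoint, star_one]
    rw [this, sub_self]
    exact isPositive_zero
  | succ n ih =>
    have h := (ih.adjoint_conj (cauchyDual T)).add (hone_sub_E T hexp)
    have heq : adjoint (cauchyDual T) ∘L (1 - Cop T n) ∘L cauchyDual T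
        + (1 - Ring.inverse (adjoint T * T)) = 1 - Cop T (n + 1) := by
      have hmul : adjoint (cauchyDual T) ∘L (1 - Cop T n) ∘L cauchyDual T
          = adjoint (cauchyDual T) * (1 - Cop T n) * cauchyDual T := rfl
      rw [hmul, hCsucc T hexp n, mul_sub, sub_mul, mul_one, hC1eq T hexp]
      abel
    rw [← heq]
    exact h

lemma hCdiff : ∀ n : ℕ, (Cop T n - Cop T (n + 1)).IsPositive := by
  intro n
  induction n with
  | zero =>
    have h0 : Cop T 0 = 1 := by simp [Cop, ← star_eq_adjoint, star_one]
    have h1 : Cop T 1 = Ring.inverse (adjoint T * T) := by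
      rw [Cop, pow_one]; exact hC1eq T hexp
    rw [h0, h1]
    exact hone_sub_E T hexp
  | succ n ih =>
    have h := ih.adjoint_conj (cauchyDual T)
    have heq : adjoint (cauchyDual T) ∘L (Cop T n - Cop T (n + 1)) ∘L cauchyDual T
        = Cop T (n + 1) - Cop T (n + 1 + 1) := by
      have hmul : adjoint (cauchyDual T) ∘L (Cop T n - Cop T (n + 1)) ∘L cauchyDual T
          = adjoint (cauchyDual T) * (Cop T n - Cop T (n + 1)) * cauchyDual T := rfl
      rw [hmul, hCsucc T hexp (n + 1), hCsucc T hexp n]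
      simp only [mul_sub, sub_mul, mul_assoc]
    rw [← heq]
    exact h

lemma hQC : ∀ n : ℕ, Ring.inverse (Cop T n) * Cop T n = 1 :=
  fun n => Ring.inverse_mul_cancel _ (hC_unit T hexp n)

lemma hQ_sa : ∀ n : ℕ, IsSelfAdjoint (Ring.inverse (Cop T n)) := by
  intro n
  have hsa : IsSelfAdjoint (Cop T n) := by rw [Cop]; exact (pos_adj_mul_self _).isSelfAdjoint
  rw [IsSelfAdjoint, ← Ring.inverse_star, hsa.star_eq]

lemma hpop_star : ∀ n : ℕ, star (pop T n) = pop T n := by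
  intro n
  rw [pop]
  simp only [star_mul, (hQ_sa T hexp n).star_eq, star_eq_adjoint, adjoint_adjoint, mul_assoc]

lemma hpop_sa : ∀ n : ℕ, adjoint (pop T n) = pop T n := by
  intro n; rw [← star_eq_adjoint]; exact hpop_star T hexp n

lemma L1 : ∀ (n : ℕ) (X : H →L[ℂ] H),
    adjoint ((cauchyDual T) ^ n) * ((cauchyDual T) ^ n * X) = Cop T n * X := by
  intro n X; rw [← mul_assoc]; rfl

lemma L2 : ∀ (n : ℕ) (X : H →L[ℂ] H),
    Ring.inverse (Cop T n) * (Cop T n * X) = X := by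
  intro n X; rw [← mul_assoc, hQC T hexp n, one_mul]

lemma hproj : ∀ n : ℕ, pop T n * pop T n = pop T n := by
  intro n
  rw [pop]
  simp only [mul_assoc]
  rw [L1 T hexp, L2 T hexp]

lemma hpp1 : ∀ n : ℕ, pop T n * pop T (n + 1) = pop T (n + 1) := by
  intro n
  rw [pop, pop]
  simp only [mul_assoc]
  rw [show ∀ Y : H →L[ℂ] H, (cauchyDual T) ^ (n + 1) * Y
      = (cauchyDual T) ^ n * (cauchyDual T * Y) from fun Y => by rw [← mul_assoc, ← pow_succ]]
  rw [L1 T hexp, L2 T hexp]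

theorem stmt_19_aux (k : ℕ) :
    pop T k * pop T k = pop T k ∧ adjoint (pop T k) = pop T k ∧
    pop T k * pop T (k + 1) = pop T (k + 1) ∧
    (pop T (k + 1)).IsPositive ∧ (pop T k - pop T (k + 1)).IsPositive ∧
    ((1 : H →L[ℂ] H) - pop T k).IsPositive ∧
    (Cop T (k + 1)).IsPositive ∧ (Cop T k - Cop T (k + 1)).IsPositive ∧
    ((1 : H →L[ℂ] H) - Cop T k).IsPositive := by
  have h21 : pop T (k + 1) * pop T k = pop T (k + 1) := by
    have h := congrArg star (hpp1 T hexp k)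
    simpa [star_mul, hpop_star T hexp] using h
  refine ⟨hproj T hexp k, hpop_sa T hexp k, hpp1 T hexp k,
    isPositive_of_idem _ (hpop_sa T hexp (k + 1)) (hproj T hexp (k + 1)), ?_, ?_,
    pos_adj_mul_self _, hCdiff T hexp k, h1subC T hexp k⟩
  · refine isPositive_of_idem _ ?_ ?_
    · rw [← star_eq_adjoint, star_sub, hpop_star T hexp, hpop_star T hexp]
    · simp only [mul_sub, sub_mul, hproj T hexp, hpp1 T hexp, h21]
      abel
  · refine isPositive_of_idem _ ?_ ?_
    · rw [← star_eq_adjoint, star_sub, star_one, hpop_star T hexp]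
    · simp only [mul_sub, sub_mul, hproj T hexp, one_mul, mul_one]
      abel

end Aux


/-- For an expansion `T` (`T*T ≥ I`): each `p_k` is an orthogonal projection,
`p_k p_{k+1} = p_{k+1}`, `0 ≤ p_{k+1} ≤ p_k ≤ I`, and `0 ≤ C_{k+1} ≤ C_k ≤ I`. -/
theorem stmt_19 {H : Type*} [NormedAddCommGroup H] [InnerProductSpace ℂ H] [CompleteSpace H]
    (T : H →L[ℂ] H) (hexp : (adjoint T * T - 1).IsPositive) (k : ℕ) :
    pop T k * pop T k = pop T k ∧ adjoint (pop T k) = pop T k ∧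
    pop T k * pop T (k + 1) = pop T (k + 1) ∧
    (pop T (k + 1)).IsPositive ∧ (pop T k - pop T (k + 1)).IsPositive ∧
    ((1 : H →L[ℂ] H) - pop T k).IsPositive ∧
    (Cop T (k + 1)).IsPositive ∧ (Cop T k - Cop T (k + 1)).IsPositive ∧
    ((1 : H →L[ℂ] H) - Cop T k).IsPositive :=
  stmt_19_aux T hexp k
end
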